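/- arXiv:1309.3292 — 2 statements merged into one kernel-verified Lean document; each statement's English description precedes it below -/
import Mathlib

section
/- Let R be a finite Frobenius ring, i.e., a finite ring admitting a generating character: an additive character χ : (R,+) → ℂ^× such that r ↦ (x ↦ χ(rx)) is a bijection from R onto the group of additive characters of R. Let w : R → ℚ be a weight with G_rt(w) = R^× (w is right-invariant), and suppose there exists a function f : R → ℚ with (wf)(x) = ∑_{r ∈ R} w(rx)·f(r) = w_H(x) for all x ∈ R, where w_H is the Hamming weight. Then (R, w) satisfies the Extension Property. -/
open Function LinearMap


section HomCount

variable {T : Type} [Ring T]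

/-- number of injective linear maps -/
noncomputable def injCard (T X A : Type) [Ring T] [AddCommGroup X] [Module T X]
    [AddCommGroup A] [Module T A] : ℕ :=
  Nat.card {g : X →ₗ[T] A // Function.Injective g}

lemma injCard_congr_left {X X' A : Type} [AddCommGroup X] [Module T X] [AddCommGroup X']
    [Module T X'] [AddCommGroup A] [Module T A] (e : X ≃ₗ[T] X') :
    injCard T X A = injCard T X' A := by
  refine Nat.card_congr ?_
  refine ⟨fun g => ⟨g.1.comp e.symm.toLinearMap, g.2.comp e.symm.injective⟩,
     fun g => ⟨g.1.comp e.toLinearMap, g.2.comp e.injective⟩, fun g => ?_, fun g => ?_⟩ <;>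
    · ext x; simp

lemma nat_card_sigma {ι : Type*} [Fintype ι] (F : ι → Type*) [∀ i, Finite (F i)] :
    Nat.card (Σ i, F i) = ∑ i, Nat.card (F i) := by
  letI : ∀ i, Fintype (F i) := fun i => Fintype.ofFinite _
  simp [Nat.card_eq_fintype_card]

instance {X : Type} [AddCommGroup X] [Module T X] [Finite X] : Finite (Submodule T X) :=
  Finite.of_injective (fun W => (W : Set X)) SetLike.coe_injective

instance {X A : Type} [AddCommGroup X] [Module T X] [AddCommGroup A] [Module T A] [Finite X]
    [Finite A] : Finite (X →ₗ[T] A) :=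
  FunLike.finite _

instance {X : Type} [AddCommGroup X] [Module T X] [Finite X] (W : Submodule T X) :
    Finite (X ⧸ W) :=
  Finite.of_surjective _ W.mkQ_surjective

lemma homCard_eq_sum (X A : Type) [AddCommGroup X] [Module T X] [AddCommGroup A] [Module T A]
    [Finite X] [Finite A] [Fintype (Submodule T X)] :
    Nat.card (X →ₗ[T] A) = ∑ W : Submodule T X, injCard T (X ⧸ W) A := by
  classical
  have e : (X →ₗ[T] A) ≃ Σ W : Submodule T X, {g : (X ⧸ W) →ₗ[T] A // Function.Injective g} := by
    refine (Equiv.sigmaFiberEquiv (LinearMap.ker : (X →ₗ[T] A) → Submodule T X)).symm.trans ?_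
    refine Equiv.sigmaCongrRight fun W => ?_
    refine ⟨fun f => ⟨W.liftQ f.1 f.2.ge, ?_⟩, fun g => ⟨g.1.comp W.mkQ, ?_⟩, fun f => ?_, fun g => ?_⟩
    · rw [← LinearMap.ker_eq_bot]
      exact Submodule.ker_liftQ_eq_bot W f.1 f.2.ge f.2.le
    · rw [LinearMap.ker_comp, LinearMap.ker_eq_bot.mpr g.2, Submodule.comap_bot, Submodule.ker_mkQ]
    · exact Subtype.ext (Submodule.liftQ_mkQ _ _ _)
    · refine Subtype.ext ?_
      apply LinearMap.ext
      intro xq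
      obtain ⟨x, rfl⟩ := W.mkQ_surjective xq
      simp
  rw [Nat.card_congr e, nat_card_sigma]
  rfl

lemma injCard_eq_of_homCard_eq {A B : Type} [AddCommGroup A] [Module T A] [AddCommGroup B]
    [Module T B] [Finite A] [Finite B]
    (h : ∀ (X : Type) [AddCommGroup X] [Module T X], Finite X →
      Nat.card (X →ₗ[T] A) = Nat.card (X →ₗ[T] B)) :
    ∀ (n : ℕ) (X : Type) [AddCommGroup X] [Module T X], Finite X → Nat.card X ≤ n →
      injCard T X A = injCard T X B := by
  intro n
  induction n with
  | zero =>
    intro X _ _ hfin hle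
    have : 0 < Nat.card X := Nat.card_pos
    omega
  | succ n ih =>
    intro X _ _ hfin hle
    classical
    letI : Fintype (Submodule T X) := Fintype.ofFinite _
    have hsum := (homCard_eq_sum X A).symm.trans ((h X hfin).trans (homCard_eq_sum X B))
    have hne : ∀ W : Submodule T X, W ≠ ⊥ → injCard T (X ⧸ W) A = injCard T (X ⧸ W) B := by
      intro W hW
      have hlt : Nat.card (X ⧸ W) < Nat.card X := by
        letI : Fintype X := Fintype.ofFinite _
        letI : Fintype (X ⧸ W) := Fintype.ofFinite _
        rw [Nat.card_eq_fintype_card, Nat.card_eq_fintype_card]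
        refine Fintype.card_lt_of_surjective_not_injective _ W.mkQ_surjective ?_
        intro hinj
        obtain ⟨x, hxW, hx0⟩ := (Submodule.ne_bot_iff W).mp hW
        exact hx0 (by
          have : W.mkQ x = W.mkQ 0 := by
            simp [Submodule.Quotient.mk_eq_zero, hxW]
          exact hinj this)
      exact ih (X ⧸ W) inferInstance (by omega)
    have hbot : injCard T (X ⧸ (⊥ : Submodule T X)) A = injCard T (X ⧸ (⊥ : Submodule T X)) B := by
      have h1 := Finset.add_sum_erase Finset.univ (fun W : Submodule T X => injCard T (X ⧸ W) A)
        (Finset.mem_univ ⊥)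
      have h2 := Finset.add_sum_erase Finset.univ (fun W : Submodule T X => injCard T (X ⧸ W) B)
        (Finset.mem_univ ⊥)
      have h3 : ∑ W ∈ Finset.univ.erase (⊥ : Submodule T X), injCard T (X ⧸ W) A
          = ∑ W ∈ Finset.univ.erase (⊥ : Submodule T X), injCard T (X ⧸ W) B := by
        refine Finset.sum_congr rfl fun W hW => hne W (Finset.ne_of_mem_erase hW)
      omega
    have e := Submodule.quotEquivOfEqBot (⊥ : Submodule T X) rfl
    rw [injCard_congr_left e.symm, injCard_congr_left (A := B) e.symm]
    exact hbot

lemma homCard_prod (X A B : Type) [AddCommGroup X] [Module T X] [AddCommGroup A] [Module T A]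
    [AddCommGroup B] [Module T B] :
    Nat.card (X →ₗ[T] (A × B)) = Nat.card (X →ₗ[T] A) * Nat.card (X →ₗ[T] B) := by
  rw [← Nat.card_prod]
  refine Nat.card_congr ?_
  exact ⟨fun f => ((LinearMap.fst T A B).comp f, (LinearMap.snd T A B).comp f),
    fun g => g.1.prod g.2, fun f => by ext x <;> rfl,
    fun g => by refine Prod.ext ?_ ?_ <;> (apply LinearMap.ext; intro x; rfl)⟩

lemma homCard_congr_right {X A A' : Type} [AddCommGroup X] [Module T X] [AddCommGroup A]
    [Module T A] [AddCommGroup A'] [Module T A'] (e : A ≃ₗ[T] A') :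
    Nat.card (X →ₗ[T] A) = Nat.card (X →ₗ[T] A') := by
  refine Nat.card_congr ⟨fun f => e.toLinearMap.comp f, fun f => e.symm.toLinearMap.comp f,
    fun f => ?_, fun f => ?_⟩ <;> · ext x; simp

theorem module_cancel {A B A' B' : Type} [AddCommGroup A] [Module T A] [AddCommGroup B]
    [Module T B] [AddCommGroup A'] [Module T A'] [AddCommGroup B'] [Module T B']
    [Finite A] [Finite B] [Finite A'] [Finite B'] [Finite T]
    (eAB : (A × B) ≃ₗ[T] (A' × B')) (eA : A ≃ₗ[T] A') : Nonempty (B ≃ₗ[T] B') := by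
  have hhom : ∀ (X : Type) [AddCommGroup X] [Module T X], Finite X →
      Nat.card (X →ₗ[T] B) = Nat.card (X →ₗ[T] B') := by
    intro X _ _ _
    have h1 : Nat.card (X →ₗ[T] A) * Nat.card (X →ₗ[T] B)
        = Nat.card (X →ₗ[T] A') * Nat.card (X →ₗ[T] B') := by
      rw [← homCard_prod, ← homCard_prod, homCard_congr_right eAB]
    rw [homCard_congr_right eA] at h1
    have hpos : 0 < Nat.card (X →ₗ[T] A') := @Nat.card_pos _ ⟨0⟩ _
    exact Nat.eq_of_mul_eq_mul_left hpos h1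
  have hinj := injCard_eq_of_homCard_eq hhom (Nat.card B) B inferInstance le_rfl
  have hpos : 0 < injCard T B B := @Nat.card_pos _ ⟨⟨LinearMap.id, fun _ _ h => h⟩⟩ _
  rw [hinj] at hpos
  obtain ⟨⟨g, hg⟩⟩ := (Nat.card_pos_iff.mp hpos).1
  have hcard : Nat.card B = Nat.card B' := by
    have := hhom T inferInstance
    rwa [Nat.card_congr (LinearMap.ringLmapEquivSelf T ℕ B).toEquiv,
      Nat.card_congr (LinearMap.ringLmapEquivSelf T ℕ B').toEquiv] at this
  have hbij : Function.Bijective g :=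
    (Nat.bijective_iff_injective_and_card g).mpr ⟨hg, hcard⟩
  exact ⟨LinearEquiv.ofBijective g hbij⟩

end HomCount
section SR1

variable {T : Type} [Ring T]

/-- right multiplication as an endomorphism of the left module `T`. -/
def rmulL (a : T) : T →ₗ[T] T where
  toFun m := m * a
  map_add' := fun _ _ => add_mul _ _ _
  map_smul' := fun r m => by simp [smul_eq_mul, mul_assoc]

@[simp] lemma rmulL_apply (a m : T) : rmulL a m = m * a := rfl

variable [Fintype T]

instance : Finite (Submodule T T) :=
  Finite.of_injective (fun W => (W : Set T)) SetLike.coe_injective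

lemma exists_stab (S : ℕ → Submodule T T) (hmono : ∀ j, S (j + 1) ≤ S j)
    (hstep : ∀ j, S (j + 1) = S j → S (j + 2) = S (j + 1)) :
    ∃ k, 1 ≤ k ∧ ∀ j, k ≤ j → S j = S k := by
  have hanti : ∀ i j, i ≤ j → S j ≤ S i := by
    intro i j hij
    induction j with
    | zero => simp_all
    | succ j ihj =>
      rcases Nat.lt_or_ge i (j+1) with h | h
      · exact le_trans (hmono j) (ihj (by omega))
      · have : i = j + 1 := by omega
        subst this; exact le_rfl
  have hni : ¬ Function.Injective
      (fun k : Fin (Nat.card (Submodule T T) + 2) => S (k.1 + 1)) := by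
    intro hinj
    have h1 := Nat.card_le_card_of_injective _ hinj
    rw [Nat.card_eq_fintype_card (α := Fin _), Fintype.card_fin] at h1
    omega
  rw [Function.not_injective_iff] at hni
  obtain ⟨a, b, hab, hne⟩ := hni
  have key : ∃ k, 1 ≤ k ∧ S (k + 1) = S k := by
    rcases Ne.lt_or_gt (fun h : a = b => hne (by rw [h])) with h | h
    · refine ⟨a.1 + 1, by omega, le_antisymm (hmono _) ?_⟩
      calc S (a.1 + 1) = S (b.1 + 1) := hab
        _ ≤ S (a.1 + 2) := hanti _ _ (by omega)
    · refine ⟨b.1 + 1, by omega, le_antisymm (hmono _) ?_⟩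
      calc S (b.1 + 1) = S (a.1 + 1) := hab.symm
        _ ≤ S (b.1 + 2) := hanti _ _ (by omega)
  obtain ⟨k, hk1, hk⟩ := key
  have hQ : ∀ j, S (k + j + 1) = S (k + j) := by
    intro j
    induction j with
    | zero => exact hk
    | succ j ihj => exact hstep (k + j) ihj
  have hconst : ∀ j, S (k + j) = S k := by
    intro j
    induction j with
    | zero => rfl
    | succ j ihj => rw [← Nat.add_assoc, hQ j, ihj]
  refine ⟨k, hk1, fun j hj => ?_⟩
  obtain ⟨d, rfl⟩ := Nat.exists_eq_add_of_le hj
  exact hconst d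


theorem sr1_left (t s : T) : ∃ z : T, IsUnit (t + z * (1 - s * t)) := by
  classical
  set x := t * s with hx
  set y := s * t with hy
  have hxty : ∀ j : ℕ, x ^ j * t = t * y ^ j := by
    intro j
    induction j with
    | zero => simp
    | succ j ihj =>
      rw [pow_succ', mul_assoc, ihj, hx, hy]
      rw [pow_succ']
      simp only [mul_assoc]
  have hyts : ∀ j : ℕ, y ^ j * s = s * x ^ j := by
    intro j
    induction j with
    | zero => simp
    | succ j ihj =>
      rw [pow_succ', mul_assoc, ihj, hx, hy, pow_succ']
      simp only [mul_assoc]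
  -- stabilized exponent for both chains
  have hstab : ∀ a : T, ∃ k, 1 ≤ k ∧ ∀ j, k ≤ j →
      LinearMap.range (rmulL (a ^ j)) = LinearMap.range (rmulL (a ^ k)) := by
    intro a
    have hmap : ∀ j, LinearMap.range (rmulL (a ^ (j+1)))
        = Submodule.map (rmulL a) (LinearMap.range (rmulL (a ^ j))) := by
      intro j
      apply le_antisymm
      · rintro m ⟨b, rfl⟩
        exact ⟨b * a ^ j, ⟨b, rfl⟩, by simp [pow_succ, mul_assoc]⟩
      · rintro m ⟨p, ⟨b, rfl⟩, rfl⟩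
        exact ⟨b, by simp [pow_succ, mul_assoc]⟩
    have hmono : ∀ j, LinearMap.range (rmulL (a ^ (j+1))) ≤ LinearMap.range (rmulL (a ^ j)) := by
      rintro j m ⟨b, rfl⟩
      exact ⟨b * a, by simp [pow_succ', mul_assoc]⟩
    obtain ⟨k, hk1, hk⟩ := exists_stab (fun j => LinearMap.range (rmulL (a ^ j))) hmono (by
      intro j hj
      have h2 := congrArg (Submodule.map (rmulL a)) hj
      rw [← hmap (j+1), ← hmap j] at h2
      exact h2)
    exact ⟨k, hk1, hk⟩
  obtain ⟨kx, hkx1, hkx⟩ := hstab x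
  obtain ⟨ky, hky1, hky⟩ := hstab y
  obtain ⟨k, hk1, hkxle, hkyle⟩ : ∃ k, 1 ≤ k ∧ kx ≤ k ∧ ky ≤ k :=
    ⟨max kx ky, le_trans hkx1 (le_max_left _ _), le_max_left _ _, le_max_right _ _⟩
  have hxstable : ∀ j, k ≤ j → LinearMap.range (rmulL (x ^ j)) = LinearMap.range (rmulL (x ^ k)) := by
    intro j hj
    rw [hkx j (le_trans hkxle hj), hkx k hkxle]
  have hystable : ∀ j, k ≤ j → LinearMap.range (rmulL (y ^ j)) = LinearMap.range (rmulL (y ^ k)) := by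
    intro j hj
    rw [hky j (le_trans hkyle hj), hky k hkyle]
  set Px := LinearMap.range (rmulL (x ^ k)) with hPx
  set Kx := LinearMap.ker (rmulL (x ^ k)) with hKx
  set Py := LinearMap.range (rmulL (y ^ k)) with hPy
  set Ky := LinearMap.ker (rmulL (y ^ k)) with hKy
  have memKx : ∀ m : T, m ∈ Kx ↔ m * x ^ k = 0 := fun m => LinearMap.mem_ker
  have memKy : ∀ m : T, m ∈ Ky ↔ m * y ^ k = 0 := fun m => LinearMap.mem_ker
  have memPx : ∀ m : T, m ∈ Px ↔ ∃ b, b * x ^ k = m := fun m => LinearMap.mem_range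
  have memPy : ∀ m : T, m ∈ Py ↔ ∃ b, b * y ^ k = m := fun m => LinearMap.mem_range
  -- generic fitting facts
  have fitting : ∀ (a : T) (P K : Submodule T T), P = LinearMap.range (rmulL (a ^ k)) →
      K = LinearMap.ker (rmulL (a ^ k)) →
      (∀ j, k ≤ j → LinearMap.range (rmulL (a ^ j)) = LinearMap.range (rmulL (a ^ k))) →
      IsCompl P K := by
    intro a P K hP hK hstable
    have h2k : LinearMap.range (rmulL (a ^ (2 * k))) = LinearMap.range (rmulL (a ^ k)) :=
      hstable (2 * k) (by omega)
    have hdisj : P ⊓ K = ⊥ := by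
      -- the endomorphism of P given by right mult by a^k is surjective hence injective
      have hmapsTo : ∀ p ∈ P, p * a ^ k ∈ P := by
        intro p hp
        rw [hP] at hp ⊢
        obtain ⟨b, rfl⟩ := hp
        rw [← h2k]
        exact ⟨b, by simp [two_mul, pow_add, mul_assoc]⟩
      set e : P →ₗ[T] P := (rmulL (a ^ k)).restrict (p := P) (q := P) (by
        intro p hp; exact hmapsTo p hp) with he
      have hesurj : Function.Surjective e := by
        rintro ⟨w, hw⟩
        have hw2 : w ∈ LinearMap.range (rmulL (a ^ (2 * k))) := by rw [h2k, ← hP]; exact hw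
        obtain ⟨b, hb⟩ := hw2
        refine ⟨⟨b * a ^ k, by rw [hP]; exact ⟨b, rfl⟩⟩, ?_⟩
        apply Subtype.ext
        show b * a ^ k * a ^ k = w
        rw [mul_assoc, ← pow_add]
        simpa [two_mul] using hb
      have heinj : Function.Injective e := (Finite.injective_iff_surjective).mpr hesurj
      rw [eq_bot_iff]
      rintro m ⟨hmP, hmK⟩
      have : e ⟨m, hmP⟩ = 0 := by
        apply Subtype.ext
        have h3 := (LinearMap.mem_ker).mp (hK ▸ hmK)
        show m * a ^ k = 0
        simpa using h3
      have := heinj (this.trans (map_zero e).symm)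
      simpa [Submodule.mem_bot] using congrArg Subtype.val this
    have hsup : P ⊔ K = ⊤ := by
      rw [eq_top_iff]
      intro m _
      have : m * a ^ k ∈ LinearMap.range (rmulL (a ^ (2 * k))) := by
        rw [h2k, ← hP]
        rw [hP]
        exact ⟨m, rfl⟩
      obtain ⟨b, hb⟩ := this
      simp only [rmulL_apply] at hb
      have hb' : b * a ^ (2*k) = m * a ^ k := hb
      rw [Submodule.mem_sup]
      refine ⟨b * a ^ k, by rw [hP]; exact ⟨b, rfl⟩, m - b * a ^ k, ?_, by abel⟩
      rw [hK, LinearMap.mem_ker]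
      simp only [rmulL_apply]
      rw [sub_mul, mul_assoc, ← pow_add]
      rw [two_mul] at hb'
      rw [hb']
      exact sub_self _
    exact ⟨disjoint_iff.mpr hdisj, codisjoint_iff.mpr hsup⟩
  have hcomplx : IsCompl Px Kx := fitting x Px Kx hPx hKx hxstable
  have hcomply : IsCompl Py Ky := fitting y Py Ky hPy hKy hystable
  obtain ⟨k', rfl⟩ : ∃ k', k = k' + 1 := ⟨k - 1, by omega⟩
  -- transport between the two decompositions
  have hPt : ∀ p ∈ Px, p * t ∈ Py := by
    intro p hp
    obtain ⟨b, hb⟩ := (memPx p).mp hp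
    rw [← hb, mul_assoc, hxty]
    exact (memPy _).mpr ⟨b * t, by rw [mul_assoc]⟩
  have hPs : ∀ p ∈ Py, p * s ∈ Px := by
    intro p hp
    obtain ⟨b, hb⟩ := (memPy p).mp hp
    rw [← hb, mul_assoc, hyts]
    exact (memPx _).mpr ⟨b * s, by rw [mul_assoc]⟩
  have hPxt_inj : ∀ p ∈ Px, p * t = 0 → p = 0 := by
    intro p hp hpt
    have hpx : p * x ^ (k' + 1) = 0 := by
      rw [pow_succ', ← mul_assoc, hx, ← mul_assoc, hpt, zero_mul, zero_mul]
    have : p ∈ Px ⊓ Kx := ⟨hp, (memKx p).mpr hpx⟩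
    rw [hcomplx.inf_eq_bot] at this
    simpa using this
  have hPys_inj : ∀ p ∈ Py, p * s = 0 → p = 0 := by
    intro p hp hps
    have hpy : p * y ^ (k' + 1) = 0 := by
      rw [pow_succ', ← mul_assoc, hy, ← mul_assoc, hps, zero_mul, zero_mul]
    have : p ∈ Py ⊓ Ky := ⟨hp, (memKy p).mpr hpy⟩
    rw [hcomply.inf_eq_bot] at this
    simpa using this
  have hKxt : ∀ q ∈ Kx, q * t ∈ Ky := by
    intro q hq
    refine (memKy _).mpr ?_
    rw [mul_assoc, ← hxty, ← mul_assoc, (memKx q).mp hq, zero_mul]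
  -- the linear iso between Px and Py
  set τ : Px →ₗ[T] Py := (rmulL t).restrict (p := Px) (q := Py) (fun p hp => hPt p hp) with hτ
  set σ : Py →ₗ[T] Px := (rmulL s).restrict (p := Py) (q := Px) (fun p hp => hPs p hp) with hσ
  have hτinj : Function.Injective τ := by
    intro p₁ p₂ hpe
    have : (p₁ - p₂ : Px) = 0 → p₁ = p₂ := fun h => by
      have := congrArg (· + p₂) h; simpa using this
    apply this
    apply Subtype.ext
    have hcoe : (p₁ : T) * t = (p₂ : T) * t := by
      have := congrArg Subtype.val hpe
      exact this
    have : ((p₁ - p₂ : Px) : T) * t = 0 := by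
      push_cast
      rw [sub_mul, hcoe, sub_self]
    simpa using hPxt_inj _ (p₁ - p₂ : Px).2 this
  have hσinj : Function.Injective σ := by
    intro p₁ p₂ hpe
    have : (p₁ - p₂ : Py) = 0 → p₁ = p₂ := fun h => by
      have := congrArg (· + p₂) h; simpa using this
    apply this
    apply Subtype.ext
    have hcoe : (p₁ : T) * s = (p₂ : T) * s := by
      have := congrArg Subtype.val hpe
      exact this
    have : ((p₁ - p₂ : Py) : T) * s = 0 := by
      push_cast
      rw [sub_mul, hcoe, sub_self]
    simpa using hPys_inj _ (p₁ - p₂ : Py).2 this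
  have hcardP : Nat.card Px = Nat.card Py :=
    le_antisymm (Nat.card_le_card_of_injective _ hτinj) (Nat.card_le_card_of_injective _ hσinj)
  have hτbij : Function.Bijective τ :=
    (Nat.bijective_iff_injective_and_card τ).mpr ⟨hτinj, hcardP⟩
  obtain ⟨h⟩ := module_cancel
    ((Submodule.prodEquivOfIsCompl Px Kx hcomplx).trans
      (Submodule.prodEquivOfIsCompl Py Ky hcomply).symm)
    (LinearEquiv.ofBijective τ hτbij)
  -- decompose 1
  have h1 : (1 : T) ∈ Px ⊔ Kx := by rw [hcomplx.sup_eq_top]; trivial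
  obtain ⟨p1, hp1, f, hf, hpf⟩ := Submodule.mem_sup.mp h1
  have hqf : ∀ q ∈ Kx, q * f = q := by
    intro q hq
    have h2 : q * p1 ∈ Px := by simpa [smul_eq_mul] using Px.smul_mem q hp1
    have h3 : q * f ∈ Kx := by simpa [smul_eq_mul] using Kx.smul_mem q hf
    have h4 : q * p1 + q * f = q := by rw [← mul_add, hpf, mul_one]
    have h5 : q * p1 ∈ Kx := by
      have : q * p1 = q - q * f := eq_sub_of_add_eq h4
      rw [this]; exact sub_mem hq h3
    have h6 : q * p1 ∈ Px ⊓ Kx := ⟨h2, h5⟩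
    rw [hcomplx.inf_eq_bot] at h6
    have h7 : q * p1 = 0 := by simpa using h6
    rw [h7, zero_add] at h4
    exact h4
  set H : Kx →ₗ[T] T := Ky.subtype.comp h.toLinearMap with hH
  set c : T := H ⟨f, hf⟩ - f * t with hc
  have hcKy : c ∈ Ky := by
    refine sub_mem ?_ (hKxt f hf)
    exact SetLike.coe_mem (h ⟨f, hf⟩)
  have hqc : ∀ q (hq : q ∈ Kx), q * c = ((h ⟨q, hq⟩ : Ky) : T) - q * t := by
    intro q hq
    have e1 : q * (f * t) = q * t := by rw [← mul_assoc, hqf q hq]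
    have e2 : q * H ⟨f, hf⟩ = ((h ⟨q, hq⟩ : Ky) : T) := by
      have e3 : (q • (⟨f, hf⟩ : Kx)) = ⟨q, hq⟩ := by
        apply Subtype.ext
        simpa [smul_eq_mul] using hqf q hq
      calc q * H ⟨f, hf⟩ = q • H ⟨f, hf⟩ := rfl
        _ = H (q • ⟨f, hf⟩) := (H.map_smul q _).symm
        _ = H ⟨q, hq⟩ := by rw [e3]
        _ = ((h ⟨q, hq⟩ : Ky) : T) := rfl
    rw [hc, mul_sub, e1, e2]
  set u : T := t + c with hu
  have hinj : Function.Injective (fun m : T => m * u) := by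
    intro m₁ m₂ hme
    have hm : (m₁ - m₂) * u = 0 := by
      simp only at hme
      rw [sub_mul, hme, sub_self]
    set m := m₁ - m₂ with hmdef
    have hmem : m ∈ Px ⊔ Kx := by rw [hcomplx.sup_eq_top]; trivial
    obtain ⟨p, hp, q, hq, hpq⟩ := Submodule.mem_sup.mp hmem
    have hexp : p * t + (p * c + q * u) = 0 := by
      calc p * t + (p * c + q * u) = (p + q) * u := by
            rw [hu, add_mul, mul_add, mul_add]; abel
        _ = m * u := by rw [hpq]
        _ = 0 := hm
    have hwKy : p * c + q * u ∈ Ky := by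
      refine add_mem ?_ ?_
      · simpa [smul_eq_mul] using Ky.smul_mem p hcKy
      · rw [hu, mul_add, hqc q hq]
        have : q * t + (((h ⟨q, hq⟩ : Ky) : T) - q * t) = ((h ⟨q, hq⟩ : Ky) : T) := by abel
        rw [this]
        exact SetLike.coe_mem _
    have hptPy : p * t ∈ Py := hPt p hp
    have hpt0 : p * t = 0 := by
      have : p * t ∈ Py ⊓ Ky := by
        constructor
        · exact hptPy
        · have : p * t = -(p * c + q * u) := eq_neg_of_add_eq_zero_left hexp
          rw [this]
          exact neg_mem hwKy
      rw [hcomply.inf_eq_bot] at this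
      simpa using this
    have hp0 : p = 0 := hPxt_inj p hp hpt0
    have hqu : q * u = ((h ⟨q, hq⟩ : Ky) : T) := by
      rw [hu, mul_add, hqc q hq]; abel
    have hq0 : (h ⟨q, hq⟩ : Ky) = 0 := by
      apply Subtype.ext
      have : p * c + q * u = 0 := by
        rw [hp0, zero_mul] at hexp ⊢
        simpa using hexp
      rw [hp0, zero_mul, zero_add, hqu] at this
      simpa using this
    have hq0' : q = 0 := by
      have := h.injective (a₁ := ⟨q, hq⟩) (a₂ := 0) (by rw [hq0, map_zero])
      simpa using congrArg Subtype.val this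
    have : m = 0 := by rw [← hpq, hp0, hq0', add_zero]
    have := sub_eq_zero.mp (hmdef ▸ this)
    exact this
  have hbij : Function.Bijective (fun m : T => m * u) :=
    Finite.injective_iff_bijective.mp hinj
  obtain ⟨v, hvu⟩ := hbij.2 1
  simp only at hvu
  have huv : u * v = 1 := by
    apply hinj
    simp only
    rw [mul_assoc, hvu, mul_one, one_mul]
  have hunit : IsUnit u := ⟨⟨u, v, huv, hvu⟩, rfl⟩
  -- express c as z * (1 - s * t)
  refine ⟨c * (∑ i ∈ Finset.range (k' + 1), y ^ i), ?_⟩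
  have hgs : (∑ i ∈ Finset.range (k' + 1), y ^ i) * (1 - y) = 1 - y ^ (k' + 1) := by
    have hg := geom_sum_mul y (k' + 1)
    have h2 := congrArg Neg.neg hg
    rw [← mul_neg, neg_sub, neg_sub] at h2
    exact h2
  have hcz : c * (∑ i ∈ Finset.range (k' + 1), y ^ i) * (1 - s * t) = c := by
    rw [mul_assoc, ← hy, hgs, mul_sub, mul_one, (memKy c).mp hcKy, sub_zero]
  rw [hcz]
  exact hunit

end SR1

theorem sr1_right {R : Type} [Ring R] [Fintype R] (t s : R) :
    ∃ z : R, IsUnit (t + (1 - t * s) * z) := by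
  letI : Fintype Rᵐᵒᵖ := Fintype.ofEquiv R MulOpposite.opEquiv
  obtain ⟨z', hz'⟩ := sr1_left (T := Rᵐᵒᵖ) (MulOpposite.op t) (MulOpposite.op s)
  refine ⟨z'.unop, ?_⟩
  rw [← isUnit_op]
  simpa only [MulOpposite.op_add, MulOpposite.op_mul, MulOpposite.op_sub, MulOpposite.op_one,
    MulOpposite.op_unop] using hz'

section Act

variable {R : Type} [Ring R] {M : Type} [AddCommGroup M] [Module R M]

/-- right scaling of a linear functional -/
def actR (lam : M →ₗ[R] R) (r : R) : M →ₗ[R] R where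
  toFun c := lam c * r
  map_add' := by intros; simp [add_mul]
  map_smul' := by intros; simp [smul_eq_mul, mul_assoc]

@[simp] lemma actR_apply (lam : M →ₗ[R] R) (r : R) (c : M) : actR lam r c = lam c * r := rfl

lemma actR_actR (lam : M →ₗ[R] R) (a b : R) : actR (actR lam a) b = actR lam (a * b) := by
  ext c; simp [mul_assoc]

@[simp] lemma actR_one (lam : M →ₗ[R] R) : actR lam 1 = lam := by ext c; simp

lemma exists_unit_act [Fintype R] (lam : M →ₗ[R] R) (t s : R) (h : actR lam (t * s) = lam) :
    ∃ u : Rˣ, actR lam (u : R) = actR lam t := by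
  obtain ⟨z, hz⟩ := sr1_right t s
  refine ⟨hz.unit, ?_⟩
  ext c
  have h1 : lam c * (t * s) = lam c := by
    have := congrArg (fun (ν : M →ₗ[R] R) => ν c) h
    simpa using this
  simp only [actR_apply, IsUnit.unit_spec]
  have h2 : lam c * ((1 - t * s) * z) = 0 := by
    rw [← mul_assoc, mul_sub, mul_one, h1, sub_self, zero_mul]
  rw [mul_add, h2, add_zero]

end Act

section Char

variable {R : Type} [Ring R] [Fintype R] [DecidableEq R] {χ : AddChar R ℂ}

lemma chi_left_ker (hχ : ∀ ψ : AddChar R ℂ, ∃! r : R, ∀ x : R, ψ x = χ (r * x))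
    {x : R} (hx : ∀ s, χ (x * s) = 1) : x = 0 := by
  obtain ⟨r, _, huniq⟩ := hχ 1
  have h1 := huniq x (fun y => by rw [hx y, AddChar.one_apply])
  have h2 := huniq 0 (fun y => by rw [zero_mul, AddChar.map_zero_eq_one, AddChar.one_apply])
  rw [h1, h2]

lemma chi_sum (hχ : ∀ ψ : AddChar R ℂ, ∃! r : R, ∀ x : R, ψ x = χ (r * x)) (x : R) :
    ∑ s : R, χ (x * s) = if x = 0 then (Fintype.card R : ℂ) else 0 := by
  by_cases hx : x = 0
  · simp [hx]
  · simp only [hx, if_false]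
    have hex : ∃ s₀, χ (x * s₀) ≠ 1 := by
      by_contra hc
      push_neg at hc
      exact hx (chi_left_ker hχ hc)
    obtain ⟨s₀, hs₀⟩ := hex
    have hre : ∑ s : R, χ (x * (s + s₀)) = ∑ s : R, χ (x * s) :=
      Fintype.sum_equiv (Equiv.addRight s₀) _ _ (fun s => rfl)
    have hexp : ∑ s : R, χ (x * (s + s₀)) = (∑ s : R, χ (x * s)) * χ (x * s₀) := by
      rw [Finset.sum_mul]
      refine Finset.sum_congr rfl fun s _ => ?_
      rw [mul_add, AddChar.map_add_eq_mul]
    have := hre.symm.trans hexp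
    have hfac : (∑ s : R, χ (x * s)) * (χ (x * s₀) - 1) = 0 := by
      rw [mul_sub, mul_one, ← this, sub_self]
    rcases mul_eq_zero.mp hfac with h | h
    · exact h
    · exact absurd (sub_eq_zero.mp h) hs₀

lemma addchar_separate {A : Type} [AddCommGroup A] [Finite A] {a : A} (ha : a ≠ 0) :
    ∃ ψ : AddChar A ℂ, ψ a ≠ 1 := by
  haveI : NeZero ((Monoid.exponent (Multiplicative A) : ℂ)) :=
    ⟨Nat.cast_ne_zero.mpr (Monoid.exponent_ne_zero_of_finite)⟩
  have ha' : (Multiplicative.ofAdd a) ≠ 1 := by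
    simpa using ha
  obtain ⟨φ, hφ⟩ := CommGroup.exists_apply_ne_one_of_hasEnoughRootsOfUnity
    (G := Multiplicative A) (M := ℂ) ha'
  refine ⟨AddChar.toMonoidHomEquiv.symm ((Units.coeHom ℂ).comp φ), ?_⟩
  intro hc
  apply hφ
  rw [← Units.val_eq_one]
  simpa using hc

lemma chi_right_ker (hχ : ∀ ψ : AddChar R ℂ, ∃! r : R, ∀ x : R, ψ x = χ (r * x))
    {x : R} (hx : ∀ s : R, χ (s * x) = 1) : x = 0 := by
  by_contra hx0
  obtain ⟨ψ, hψ⟩ := addchar_separate (A := R) hx0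
  obtain ⟨r, hr, _⟩ := hχ ψ
  exact hψ ((hr x).trans (hx r))

lemma chi_values_ne_zero (x : R) : χ x ≠ 0 := by
  intro hc
  have : χ x * χ (-x) = 1 := by
    rw [← AddChar.map_add_eq_mul, add_neg_cancel, AddChar.map_zero_eq_one]
  rw [hc, zero_mul] at this
  exact zero_ne_one this

lemma chi_comp_inj (hχ : ∀ ψ : AddChar R ℂ, ∃! r : R, ∀ x : R, ψ x = χ (r * x))
    {M : Type} [AddCommGroup M] [Module R M] (lam mu : M →ₗ[R] R)
    (h : ∀ c, χ (lam c) = χ (mu c)) : lam = mu := by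
  ext c
  have key : ∀ s : R, χ (s * (lam c - mu c)) = 1 := by
    intro s
    have h1 : χ (lam (s • c)) = χ (mu (s • c)) := h (s • c)
    rw [lam.map_smul, mu.map_smul, smul_eq_mul, smul_eq_mul] at h1
    have h2 : χ (s * lam c - s * mu c) * χ (s * mu c) = χ (s * lam c) := by
      rw [← AddChar.map_add_eq_mul, sub_add_cancel]
    rw [h1] at h2
    have h3 := mul_right_cancel₀ (chi_values_ne_zero _) (h2.trans (one_mul _).symm)
    rw [mul_sub]
    exact h3
  have := chi_right_ker hχ key
  exact sub_eq_zero.mp this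

end Char

section Extract

variable {A : Type} [AddCommGroup A]

lemma addChar_linearIndependent :
    LinearIndependent ℂ (fun ψ : AddChar A ℂ => (ψ : A → ℂ)) := by
  have h := linearIndependent_monoidHom (Multiplicative A) ℂ
  have h2 := h.comp (AddChar.toMonoidHomEquiv (A := A) (M := ℂ))
    AddChar.toMonoidHomEquiv.injective
  exact h2

lemma char_count {ι : Type} [Fintype ι] (F G : ι → AddChar A ℂ)
    (h : ∀ c, ∑ i, F i c = ∑ i, G i c) (ψ : AddChar A ℂ) :
    (Finset.univ.filter (fun i => F i = ψ)).card
      = (Finset.univ.filter (fun i => G i = ψ)).card := by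
  classical
  set SS : Finset (AddChar A ℂ) := Finset.univ.image F ∪ Finset.univ.image G with hSS
  set g : AddChar A ℂ → ℂ := fun τ =>
    ((Finset.univ.filter (fun i => F i = τ)).card : ℂ)
      - ((Finset.univ.filter (fun i => G i = τ)).card : ℂ) with hg
  have collect : ∀ (H : ι → AddChar A ℂ), (∀ i, H i ∈ SS) → ∀ c : A,
      ∑ τ ∈ SS, ((Finset.univ.filter (fun i => H i = τ)).card : ℂ) * τ c = ∑ i, H i c := by
    intro H hH c
    rw [← Finset.sum_fiberwise_of_maps_to (g := H) (fun i _ => hH i) (fun i => H i c)]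
    refine Finset.sum_congr rfl fun τ _ => ?_
    have : ∀ i ∈ Finset.univ.filter (fun i => H i = τ), H i c = τ c := by
      intro i hi
      rw [(Finset.mem_filter.mp hi).2]
    rw [Finset.sum_congr rfl this, Finset.sum_const, nsmul_eq_mul]
  have hzero : ∑ τ ∈ SS, g τ • (τ : A → ℂ) = 0 := by
    funext c
    have happ : (∑ τ ∈ SS, g τ • (τ : A → ℂ)) c = ∑ τ ∈ SS, g τ * τ c := by
      rw [Finset.sum_apply]
      rfl
    rw [happ]
    have hsplit : ∑ τ ∈ SS, g τ * τ c
        = (∑ τ ∈ SS, ((Finset.univ.filter (fun i => F i = τ)).card : ℂ) * τ c)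
          - ∑ τ ∈ SS, ((Finset.univ.filter (fun i => G i = τ)).card : ℂ) * τ c := by
      rw [← Finset.sum_sub_distrib]
      refine Finset.sum_congr rfl fun τ _ => ?_
      rw [hg, sub_mul]
    rw [hsplit, collect F (fun i => Finset.mem_union_left _ (Finset.mem_image_of_mem F
      (Finset.mem_univ i))) c, collect G (fun i => Finset.mem_union_right _
      (Finset.mem_image_of_mem G (Finset.mem_univ i))) c, h c, sub_self]
    rfl
  have hcoef := linearIndependent_iff'.mp (addChar_linearIndependent (A := A)) SS g hzero
  by_cases hψ : ψ ∈ SS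
  · have := hcoef ψ hψ
    rw [hg] at this
    have h2 := sub_eq_zero.mp this
    exact_mod_cast h2
  · have h1 : Finset.univ.filter (fun i => F i = ψ) = ∅ := by
      refine Finset.filter_eq_empty_iff.mpr fun {i} _ hc => hψ ?_
      exact Finset.mem_union_left _ (hc ▸ Finset.mem_image_of_mem F (Finset.mem_univ i))
    have h2 : Finset.univ.filter (fun i => G i = ψ) = ∅ := by
      refine Finset.filter_eq_empty_iff.mpr fun {i} _ hc => hψ ?_
      exact Finset.mem_union_right _ (hc ▸ Finset.mem_image_of_mem G (Finset.mem_univ i))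
    rw [h1, h2]

end Extract

section Matching

variable {R : Type} [Ring R] [Fintype R] {M : Type} [AddCommGroup M] [Module R M]

/-- number of `r` carrying `m` to `α` under the right action -/
noncomputable def cntA (m α : M →ₗ[R] R) : ℕ :=
  Nat.card {r : R // actR m r = α}

lemma cntA_pos_iff {m α : M →ₗ[R] R} : 0 < cntA m α ↔ ∃ r, actR m r = α := by
  rw [cntA, Nat.card_pos_iff]
  constructor
  · rintro ⟨⟨⟨r, hr⟩⟩, _⟩
    exact ⟨r, hr⟩
  · rintro ⟨r, hr⟩
    exact ⟨⟨⟨r, hr⟩⟩, inferInstance⟩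

lemma cntA_self_pos (m : M →ₗ[R] R) : 0 < cntA m m :=
  cntA_pos_iff.mpr ⟨1, actR_one m⟩

lemma cntA_unit (m : M →ₗ[R] R) (u : Rˣ) (α : M →ₗ[R] R) :
    cntA (actR m (u : R)) α = cntA m α := by
  refine Nat.card_congr ⟨fun q => ⟨(u : R) * q.1, ?_⟩, fun r => ⟨((u⁻¹ : Rˣ) : R) * r.1, ?_⟩,
    fun q => ?_, fun r => ?_⟩
  · rw [← actR_actR]; exact q.2
  · rw [actR_actR, ← mul_assoc, Units.mul_inv, one_mul]; exact r.2
  · apply Subtype.ext; simp [← mul_assoc]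
  · apply Subtype.ext; simp [← mul_assoc]

/-- the orbit of a functional under the right action -/
def orbS (m : M →ₗ[R] R) : Set (M →ₗ[R] R) :=
  Set.range (fun r : R => actR m r)

lemma orbS_sub {m α : M →ₗ[R] R} (r : R) (h : actR m r = α) : orbS α ⊆ orbS m := by
  rintro β ⟨q, hq⟩
  refine ⟨r * q, ?_⟩
  show actR m (r * q) = β
  rw [← actR_actR, h]
  exact hq

lemma mem_orbS_self (m : M →ₗ[R] R) : m ∈ orbS m := ⟨1, actR_one m⟩

theorem matching {ι : Type} [DecidableEq ι] (L Mu : ι → (M →ₗ[R] R)) :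
    ∀ (N : ℕ) (s t : Finset ι), s.card = N → t.card = N →
    (∀ α, ∑ i ∈ s, cntA (L i) α = ∑ j ∈ t, cntA (Mu j) α) →
    ∃ g : ι → ι, Set.InjOn g ↑t ∧ (∀ j ∈ t, g j ∈ s) ∧
      ∀ j ∈ t, ∃ u : Rˣ, Mu j = actR (L (g j)) (u : R) := by
  intro N
  induction N with
  | zero =>
    intro s t hs ht _
    have ht0 : t = ∅ := Finset.card_eq_zero.mp ht
    subst ht0
    exact ⟨fun j => j, by simp [Set.InjOn], by simp, by simp⟩
  | succ N ih =>
    intro s t hs ht hcount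
    classical
    have htne : t.Nonempty := Finset.card_pos.mp (by omega)
    obtain ⟨j1, hj1⟩ := htne
    have hUne : (s.image L ∪ t.image Mu).Nonempty :=
      ⟨Mu j1, Finset.mem_union_right _ (Finset.mem_image_of_mem Mu hj1)⟩
    obtain ⟨m₀, hm₀U, hmax⟩ := Finset.exists_max_image (s.image L ∪ t.image Mu)
      (fun m => (orbS m).ncard) hUne
    have claim : ∃ i0 ∈ s, ∃ j0 ∈ t, ∃ u : Rˣ, Mu j0 = actR (L i0) (u : R) := by
      rcases Finset.mem_union.mp hm₀U with hm | hm
      · obtain ⟨i0, hi0s, hLi0⟩ := Finset.mem_image.mp hm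
        have h1 : 0 < ∑ j ∈ t, cntA (Mu j) (L i0) := by
          rw [← hcount]
          calc 0 < cntA (L i0) (L i0) := cntA_self_pos _
            _ ≤ ∑ i ∈ s, cntA (L i) (L i0) :=
              Finset.single_le_sum (f := fun i => cntA (L i) (L i0))
                (fun i _ => Nat.zero_le _) hi0s
        obtain ⟨j0, hj0t, hj0⟩ := Finset.exists_ne_zero_of_sum_ne_zero h1.ne'
        obtain ⟨s1, hs1⟩ := cntA_pos_iff.mp (Nat.pos_of_ne_zero hj0)
        have hsub : orbS (L i0) ⊆ orbS (Mu j0) := orbS_sub s1 hs1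
        have hle : (orbS (Mu j0)).ncard ≤ (orbS (L i0)).ncard := by
          have := hmax (Mu j0) (Finset.mem_union_right _ (Finset.mem_image_of_mem Mu hj0t))
          rwa [← hLi0] at this
        have heq : orbS (L i0) = orbS (Mu j0) :=
          Set.eq_of_subset_of_ncard_le hsub hle (Set.finite_range _)
        obtain ⟨t1, ht1x⟩ := heq ▸ mem_orbS_self (Mu j0)
        have ht1 : actR (L i0) t1 = Mu j0 := ht1x
        have hts : actR (L i0) (t1 * s1) = L i0 := by rw [← actR_actR, ht1, hs1]
        obtain ⟨u, hu⟩ := exists_unit_act (L i0) t1 s1 hts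
        exact ⟨i0, hi0s, j0, hj0t, u, by rw [hu, ht1]⟩
      · obtain ⟨j0, hj0t, hMj0⟩ := Finset.mem_image.mp hm
        have h1 : 0 < ∑ i ∈ s, cntA (L i) (Mu j0) := by
          rw [hcount]
          calc 0 < cntA (Mu j0) (Mu j0) := cntA_self_pos _
            _ ≤ ∑ j ∈ t, cntA (Mu j) (Mu j0) :=
              Finset.single_le_sum (f := fun j => cntA (Mu j) (Mu j0))
                (fun i _ => Nat.zero_le _) hj0t
        obtain ⟨i0, hi0s, hi0⟩ := Finset.exists_ne_zero_of_sum_ne_zero h1.ne'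
        obtain ⟨s1, hs1⟩ := cntA_pos_iff.mp (Nat.pos_of_ne_zero hi0)
        have hsub : orbS (Mu j0) ⊆ orbS (L i0) := orbS_sub s1 hs1
        have hle : (orbS (L i0)).ncard ≤ (orbS (Mu j0)).ncard := by
          have := hmax (L i0) (Finset.mem_union_left _ (Finset.mem_image_of_mem L hi0s))
          rwa [← hMj0] at this
        have heq : orbS (Mu j0) = orbS (L i0) :=
          Set.eq_of_subset_of_ncard_le hsub hle (Set.finite_range _)
        obtain ⟨t1, ht1x⟩ := heq ▸ mem_orbS_self (L i0)
        have ht1 : actR (Mu j0) t1 = L i0 := ht1x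
        have hts : actR (L i0) (s1 * t1) = L i0 := by rw [← actR_actR, hs1, ht1]
        obtain ⟨u, hu⟩ := exists_unit_act (L i0) s1 t1 hts
        exact ⟨i0, hi0s, j0, hj0t, u, by rw [hu, hs1]⟩
    obtain ⟨i0, hi0s, j0, hj0t, u, hu⟩ := claim
    have hcnt_eq : ∀ α, cntA (Mu j0) α = cntA (L i0) α := by
      intro α
      rw [hu]
      exact cntA_unit (L i0) u α
    have hs' : (s.erase i0).card = N := by rw [Finset.card_erase_of_mem hi0s]; omega
    have ht' : (t.erase j0).card = N := by rw [Finset.card_erase_of_mem hj0t]; omega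
    have hcount' : ∀ α, ∑ i ∈ s.erase i0, cntA (L i) α = ∑ j ∈ t.erase j0, cntA (Mu j) α := by
      intro α
      have h1 := Finset.add_sum_erase s (fun i => cntA (L i) α) hi0s
      have h2 := Finset.add_sum_erase t (fun j => cntA (Mu j) α) hj0t
      have h3 := hcount α
      have h4 := hcnt_eq α
      omega
    obtain ⟨g', hg'inj, hg'mem, hg'u⟩ := ih (s.erase i0) (t.erase j0) hs' ht' hcount'
    refine ⟨fun j => if j = j0 then i0 else g' j, ?_, ?_, ?_⟩
    · intro a ha b hb hab
      simp only [Finset.mem_coe] at ha hb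
      simp only [] at hab
      by_cases haj : a = j0 <;> by_cases hbj : b = j0
      · rw [haj, hbj]
      · exfalso
        rw [if_pos haj, if_neg hbj] at hab
        have : g' b ∈ s.erase i0 := hg'mem b (Finset.mem_erase.mpr ⟨hbj, hb⟩)
        exact (Finset.mem_erase.mp this).1 hab.symm
      · exfalso
        rw [if_neg haj, if_pos hbj] at hab
        have : g' a ∈ s.erase i0 := hg'mem a (Finset.mem_erase.mpr ⟨haj, ha⟩)
        exact (Finset.mem_erase.mp this).1 hab
      · rw [if_neg haj, if_neg hbj] at hab
        exact hg'inj (Finset.mem_coe.mpr (Finset.mem_erase.mpr ⟨haj, ha⟩))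
          (Finset.mem_coe.mpr (Finset.mem_erase.mpr ⟨hbj, hb⟩)) hab
    · intro j hj
      show (if j = j0 then i0 else g' j) ∈ s
      by_cases hjj : j = j0
      · rw [if_pos hjj]; exact hi0s
      · rw [if_neg hjj]
        exact Finset.mem_of_mem_erase (hg'mem j (Finset.mem_erase.mpr ⟨hjj, hj⟩))
    · intro j hj
      show ∃ u : Rˣ, Mu j = actR (L (if j = j0 then i0 else g' j)) (u : R)
      by_cases hjj : j = j0
      · rw [if_pos hjj, hjj]
        exact ⟨u, hu⟩
      · rw [if_neg hjj]
        exact hg'u j (Finset.mem_erase.mpr ⟨hjj, hj⟩)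

end Matching

section Assembly

/-- the additive character of `M` obtained by composing a linear functional with `χ`. -/
def charOf {R : Type} [Ring R] {M : Type} [AddCommGroup M] [Module R M]
    (χ : AddChar R ℂ) (α : M →ₗ[R] R) : AddChar M ℂ where
  toFun := fun c => χ (α c)
  map_zero_eq_one' := by
    show χ (α 0) = 1
    rw [map_zero, AddChar.map_zero_eq_one]
  map_add_eq_mul' := fun a b => by
    show χ (α (a + b)) = χ (α a) * χ (α b)
    rw [map_add, AddChar.map_add_eq_mul]

@[simp] lemma charOf_apply {R : Type} [Ring R] {M : Type} [AddCommGroup M] [Module R M]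
    (χ : AddChar R ℂ) (α : M →ₗ[R] R) (c : M) : charOf χ α c = χ (α c) := rfl

end Assembly


/-- A finite ring is Frobenius if it admits a generating character: an additive
character `χ : (R,+) → ℂ^×` such that `r ↦ (x ↦ χ(rx))` is a bijection from `R`
onto the group of additive characters of `R`. -/
def IsFrobenius (R : Type) [Ring R] : Prop :=
  ∃ χ : AddChar R ℂ, ∀ ψ : AddChar R ℂ, ∃! r : R, ∀ x : R, ψ x = χ (r * x)

/-- `(R, w)` satisfies the Extension Property: for every `n`, every linear code
`C ≤ ᴿRⁿ` and every injective `w`-isometry `φ : C → Rⁿ` (with `w` extended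
additively to `Rⁿ`), `φ` is the restriction of a `G_rt(w)`-monomial
transformation `(x_1,…,x_n) ↦ (x_{π(1)}u_1,…,x_{π(n)}u_n)` of `Rⁿ`. -/
def ExtensionProperty (R : Type) [Ring R] (w : R → ℚ) : Prop :=
  ∀ (n : ℕ) (C : Submodule R (Fin n → R)) (φ : C →ₗ[R] (Fin n → R)),
    Function.Injective φ →
    (∀ c : C, ∑ i, w (φ c i) = ∑ i, w ((c : Fin n → R) i)) →
    ∃ (π : Equiv.Perm (Fin n)) (u : Fin n → Rˣ),
      (∀ i, ∀ x : R, w (x * (u i : R)) = w x) ∧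
      ∀ c : C, ∀ i, φ c i = (c : Fin n → R) (π i) * (u i : R)

/-- on a finite Frobenius ring, a right-invariant weight `w` such that
the Hamming weight is a right correlation of `w` satisfies the Extension Property. -/
theorem stmt1 (R : Type) [Ring R] [Fintype R] [DecidableEq R]
    (hFrob : IsFrobenius R) (w : R → ℚ)
    (hrinv : ∀ (u : Rˣ) (x : R), w (x * (u : R)) = w x)
    (hH : ∃ f : R → ℚ, ∀ x : R,
      (∑ r : R, w (r * x) * f r) = (if x = 0 then (0 : ℚ) else 1)) :
    ExtensionProperty R w := by
  obtain ⟨χ, hχ⟩ := hFrob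
  obtain ⟨f, hf⟩ := hH
  intro n C φ hinj hiso
  classical
  set L : Fin n → (C →ₗ[R] R) := fun i => (LinearMap.proj i).comp C.subtype with hL
  set Mu : Fin n → (C →ₗ[R] R) := fun i => (LinearMap.proj i).comp φ with hMu
  have hLc : ∀ (i) (c : C), L i c = (c : Fin n → R) i := fun i c => rfl
  have hMc : ∀ (i) (c : C), Mu i c = φ c i := fun i c => rfl
  -- `φ` preserves the Hamming weight
  have hham : ∀ c : C, ∑ i, (if (c : Fin n → R) i = 0 then (0:ℚ) else 1)
      = ∑ i, (if φ c i = 0 then (0:ℚ) else 1) := by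
    intro c
    have key : ∀ v : Fin n → R, ∑ i, (if v i = 0 then (0:ℚ) else 1)
        = ∑ r : R, (∑ i, w (r * v i)) * f r := by
      intro v
      calc ∑ i, (if v i = 0 then (0:ℚ) else 1)
          = ∑ i, ∑ r : R, w (r * v i) * f r :=
            Finset.sum_congr rfl fun i _ => (hf _).symm
        _ = ∑ r : R, ∑ i, w (r * v i) * f r := Finset.sum_comm
        _ = ∑ r : R, (∑ i, w (r * v i)) * f r :=
            Finset.sum_congr rfl fun r _ => (Finset.sum_mul _ _ _).symm
    rw [key ((c : Fin n → R)), key (fun i => φ c i)]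
    refine Finset.sum_congr rfl fun r _ => ?_
    congr 1
    have h1 := hiso (r • c)
    have h2 : ∀ i, φ (r • c) i = r * φ c i := by
      intro i
      rw [map_smul]
      rfl
    have h3 : ∀ i, ((r • c : C) : Fin n → R) i = r * (c : Fin n → R) i := fun i => rfl
    calc ∑ i, w (r * (c : Fin n → R) i) = ∑ i, w (((r • c : C) : Fin n → R) i) :=
          Finset.sum_congr rfl fun i _ => by rw [h3]
      _ = ∑ i, w (φ (r • c) i) := (hiso (r • c)).symm
      _ = ∑ i, w (r * φ c i) := Finset.sum_congr rfl fun i _ => by rw [h2]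
  -- equality of zero-coordinate counts
  have hzero : ∀ c : C,
      (Finset.univ.filter (fun i => (c : Fin n → R) i = 0)).card
        = (Finset.univ.filter (fun i => φ c i = 0)).card := by
    intro c
    have indicator : ∀ (v : Fin n → R), ∑ i, (if v i = 0 then (0:ℚ) else 1)
        = ((Finset.univ.filter (fun i => ¬ (v i = 0))).card : ℚ) := by
      intro v
      rw [Finset.sum_ite, Finset.sum_const, Finset.sum_const]
      simp
    have h1 := hham c
    rw [indicator ((c : Fin n → R)), indicator (fun i => φ c i)] at h1
    have h2 : (Finset.univ.filter (fun i => ¬ ((c : Fin n → R) i = 0))).card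
        = (Finset.univ.filter (fun i => ¬ (φ c i = 0))).card := by exact_mod_cast h1
    have h3 := Finset.card_filter_add_card_filter_not
      (s := Finset.univ) (p := fun i => (c : Fin n → R) i = 0)
    have h4 := Finset.card_filter_add_card_filter_not
      (s := Finset.univ) (p := fun i => φ c i = 0)
    omega
  -- the character identity
  have hchar : ∀ c : C, ∑ p : Fin n × R, charOf χ (actR (L p.1) p.2) c
      = ∑ p : Fin n × R, charOf χ (actR (Mu p.1) p.2) c := by
    intro c
    have key : ∀ lam : Fin n → (C →ₗ[R] R), ∑ p : Fin n × R, charOf χ (actR (lam p.1) p.2) c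
        = ((Finset.univ.filter (fun i => lam i c = 0)).card : ℂ) * (Fintype.card R : ℂ) := by
      intro lam
      rw [Fintype.sum_prod_type]
      calc ∑ i, ∑ s : R, charOf χ (actR (lam i) s) c
          = ∑ i, ∑ s : R, χ ((lam i c) * s) := rfl
        _ = ∑ i : Fin n, (if lam i c = 0 then (Fintype.card R : ℂ) else 0) :=
            Finset.sum_congr rfl fun i _ => chi_sum hχ (lam i c)
        _ = ((Finset.univ.filter (fun i => lam i c = 0)).card : ℂ) * (Fintype.card R : ℂ) := by
            rw [Finset.sum_ite, Finset.sum_const, Finset.sum_const]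
            simp [mul_comm]
    rw [key L, key Mu]
    have hLzero : (Finset.univ.filter (fun i => L i c = 0)).card
        = (Finset.univ.filter (fun i => Mu i c = 0)).card := by
      exact hzero c
    rw [hLzero]
  -- transfer to counts
  have hcnt : ∀ α : C →ₗ[R] R, ∑ i, cntA (L i) α = ∑ i, cntA (Mu i) α := by
    intro α
    have hcc := char_count (A := C) (ι := Fin n × R)
      (fun p => charOf χ (actR (L p.1) p.2)) (fun p => charOf χ (actR (Mu p.1) p.2))
      hchar (charOf χ α)
    have hiff : ∀ lam : C →ₗ[R] R, charOf χ lam = charOf χ α ↔ lam = α := by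
      intro lam
      constructor
      · intro h
        refine chi_comp_inj hχ lam α fun c => ?_
        have := congrArg (fun ψ : AddChar C ℂ => ψ c) h
        simpa using this
      · intro h; rw [h]
    have convert_count : ∀ lam : Fin n → (C →ₗ[R] R),
        (Finset.univ.filter (fun p : Fin n × R => charOf χ (actR (lam p.1) p.2) = charOf χ α)).card
          = ∑ i, cntA (lam i) α := by
      intro lam
      have e1 : (Finset.univ.filter
          (fun p : Fin n × R => charOf χ (actR (lam p.1) p.2) = charOf χ α))
            = (Finset.univ.filter (fun p : Fin n × R => actR (lam p.1) p.2 = α)) := by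
        refine Finset.filter_congr fun p _ => ?_
        exact hiff _
      rw [e1, Finset.card_filter, Fintype.sum_prod_type]
      refine Finset.sum_congr rfl fun i _ => ?_
      rw [← Finset.card_filter]
      rw [cntA, Nat.card_eq_fintype_card, Fintype.card_subtype]
    rw [← convert_count L, ← convert_count Mu]
    exact hcc
  -- matching
  obtain ⟨g, hginj, _, hgu⟩ := matching L Mu n Finset.univ Finset.univ
    (by simp) (by simp) (fun α => hcnt α)
  have hginj' : Function.Injective g := by
    have h2 : Set.InjOn g Set.univ := by simpa using hginj
    exact Set.injOn_univ.mp h2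
  have hgbij : Function.Bijective g := Finite.injective_iff_bijective.mp hginj'
  have hu := fun i => hgu i (Finset.mem_univ i)
  choose u hu using hu
  refine ⟨Equiv.ofBijective g hgbij, u, fun i x => hrinv (u i) x, fun c i => ?_⟩
  have h1 := congrArg (fun ν : C →ₗ[R] R => ν c) (hu i)
  exact h1
end

section
/- Let R be a finite Frobenius ring (a finite ring admitting a generating character: an additive character χ : (R,+) → ℂ^× such that r ↦ (x ↦ χ(rx)) is a bijection from R onto the group of additive characters of R), and let w : R → ℚ be a bi-invariant weight with w(0) = 0 that satisfies the Extension Property. Then the ℚ-linear map f ↦ wf, where (wf)(x) = ∑_{r ∈ R} w(rx)·f(r), from the space {f : R → ℚ : f(0) = 0 and f(ux) = f(x) for all x ∈ R, u ∈ R^×} to the space {g : R → ℚ : g(0) = 0 and g(xu) = g(x) for all x ∈ R, u ∈ R^×}, is bijective. -/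
/-- The right correlation `f ↦ wf`, `(wf)(x) = ∑_{r ∈ R} w(rx)·f(r)`. -/
def correlation (R : Type) [Ring R] [Fintype R] (w : R → ℚ) (f : R → ℚ) : R → ℚ :=
  fun x => ∑ r : R, w (r * x) * f r

/-- Left-invariant rational functions on `R` vanishing at `0`. -/
def leftInvV0 (R : Type) [Ring R] : Set (R → ℚ) :=
  {f | f 0 = 0 ∧ ∀ (u : Rˣ) (x : R), f ((u : R) * x) = f x}

/-- Right-invariant rational functions on `R` vanishing at `0`. -/
def rightInvV0 (R : Type) [Ring R] : Set (R → ℚ) :=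
  {g | g 0 = 0 ∧ ∀ (u : Rˣ) (x : R), g (x * (u : R)) = g x}

open Finset

section Aux

variable (R : Type) [Ring R] [Fintype R]

/-- `leftInvV0` as a `ℚ`-submodule. -/
def VLsub : Submodule ℚ (R → ℚ) where
  carrier := leftInvV0 R
  add_mem' := fun hf hg => ⟨by simp [hf.1, hg.1], fun u x => by
    simp only [Pi.add_apply, hf.2 u x, hg.2 u x]⟩
  zero_mem' := ⟨rfl, fun u x => rfl⟩
  smul_mem' := fun c f hf => ⟨by simp [hf.1], fun u x => by
    simp only [Pi.smul_apply, hf.2 u x]⟩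

/-- `rightInvV0` as a `ℚ`-submodule. -/
def VRsub : Submodule ℚ (R → ℚ) where
  carrier := rightInvV0 R
  add_mem' := fun hf hg => ⟨by simp [hf.1, hg.1], fun u x => by
    simp only [Pi.add_apply, hf.2 u x, hg.2 u x]⟩
  zero_mem' := ⟨rfl, fun u x => rfl⟩
  smul_mem' := fun c f hf => ⟨by simp [hf.1], fun u x => by
    simp only [Pi.smul_apply, hf.2 u x]⟩

variable {R} (w : R → ℚ)

/-- The correlation as a linear map. -/
def corrA : (R → ℚ) →ₗ[ℚ] (R → ℚ) where
  toFun := correlation R w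
  map_add' f g := by
    funext x
    simp [correlation, mul_add, Finset.sum_add_distrib]
  map_smul' c f := by
    funext x
    simp [correlation, Finset.mul_sum]
    refine Finset.sum_congr rfl fun r _ => by ring

/-- The opposite-sided correlation as a linear map. -/
def corrB : (R → ℚ) →ₗ[ℚ] (R → ℚ) where
  toFun g := fun r => ∑ x : R, w (r * x) * g x
  map_add' f g := by
    funext r
    simp [mul_add, Finset.sum_add_distrib]
  map_smul' c f := by
    funext r
    simp [Finset.mul_sum]
    refine Finset.sum_congr rfl fun x _ => by ring

theorem adjoint_eq (f g : R → ℚ) :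
    ∑ x : R, correlation R w f x * g x = ∑ r : R, f r * corrB w g r := by
  simp only [correlation, corrB, LinearMap.coe_mk, AddHom.coe_mk, Finset.sum_mul,
    Finset.mul_sum]
  rw [Finset.sum_comm]
  exact Finset.sum_congr rfl fun r _ => Finset.sum_congr rfl fun x _ => by ring

/-- Key lemma 1 (proved from the Extension Property): the opposite-sided
correlation is injective on right-invariant functions vanishing at `0`. -/
theorem key_inj
    (hbi : ∀ (u : Rˣ) (x : R), w ((u : R) * x) = w x ∧ w (x * (u : R)) = w x)
    (h0 : w 0 = 0) (hEP : ExtensionProperty R w)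
    (g : R → ℚ) (hg : g ∈ rightInvV0 R) (hBg : corrB w g = 0) : g = 0 := by
  classical
  obtain ⟨hg0, hginv⟩ := hg
  -- Clear denominators
  set D : ℕ := ∏ x : R, (g x).den with hDdef
  have hDne : (D : ℚ) ≠ 0 := by
    have : D ≠ 0 := Finset.prod_ne_zero_iff.mpr fun x _ => (g x).den_nz
    exact_mod_cast this
  have hMex : ∀ x : R, ∃ z : ℤ, (D : ℚ) * g x = z := by
    intro x
    obtain ⟨c, hc⟩ := Finset.dvd_prod_of_mem (fun x => (g x).den) (Finset.mem_univ x)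
    refine ⟨(g x).num * c, ?_⟩
    have h1 : ((g x).den : ℚ) * g x = (g x).num := by
      rw [mul_comm]
      exact_mod_cast Rat.mul_den_eq_num (g x)
    have hc' : (D : ℚ) = ((g x).den : ℚ) * (c : ℚ) := by
      rw [hDdef]; exact_mod_cast hc
    rw [hc']
    push_cast
    rw [mul_comm ((g x).den : ℚ) (c : ℚ), mul_assoc, h1]
    ring
  choose M hM using hMex
  -- Facts about M
  have hMinv : ∀ (u : Rˣ) (x : R), M (x * u) = M x := by
    intro u x
    have h1 := hM (x * u)
    rw [hginv u x] at h1
    exact_mod_cast h1.symm.trans (hM x)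
  have hM0 : M 0 = 0 := by
    have h1 := hM 0
    rw [hg0, mul_zero] at h1
    exact_mod_cast h1.symm
  have horthM : ∀ r : R, ∑ x : R, (M x : ℚ) * w (r * x) = 0 := by
    intro r
    have h1 : corrB w g r = 0 := by rw [hBg]; rfl
    have h2 : ∑ x : R, w (r * x) * g x = 0 := h1
    calc ∑ x : R, (M x : ℚ) * w (r * x)
        = ∑ x : R, (D : ℚ) * (w (r * x) * g x) := by
          refine Finset.sum_congr rfl fun x _ => ?_
          rw [← hM x]; ring
      _ = (D : ℚ) * ∑ x : R, w (r * x) * g x := by rw [Finset.mul_sum]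
      _ = 0 := by rw [h2, mul_zero]
  set P : R → ℕ := fun x => (M x).toNat with hPdef
  set N : R → ℕ := fun x => (-(M x)).toNat with hNdef
  have hPN : ∀ x, (P x : ℤ) - (N x : ℤ) = M x := by
    intro x; simp only [hPdef, hNdef]; omega
  -- the generic multiset vector
  have sumlem : ∀ (a b : R → ℕ) (F : R → ℚ),
      (∑ t : (Unit ⊕ ((Σ x : R, Fin (a x)) ⊕ (Σ x : R, Fin (b x)))),
        F (Sum.elim (fun _ => (1 : R)) (Sum.elim (fun p => p.1) fun _ => (0 : R)) t))
      = F 1 + ((∑ x : R, (a x : ℚ) * F x) + (∑ x : R, (b x : ℚ)) * F 0) := by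
    intro a b F
    rw [Fintype.sum_sum_type, Fintype.sum_sum_type]
    have h1 : ∀ (m : R → ℕ) (G : R → ℚ),
        (∑ p : (Σ x : R, Fin (m x)), G p.1) = ∑ x : R, (m x : ℚ) * G x := by
      intro m G
      rw [← Finset.univ_sigma_univ, Finset.sum_sigma]
      refine Finset.sum_congr rfl fun x _ => ?_
      simp [Finset.sum_const, nsmul_eq_mul]
    simp only [Sum.elim_inl, Sum.elim_inr]
    rw [h1 a (fun x => F x), h1 b (fun _ => F 0)]
    simp [Finset.sum_mul]
  have hcard : ∀ a b : R → ℕ,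
      Fintype.card (Unit ⊕ ((Σ x : R, Fin (a x)) ⊕ (Σ x : R, Fin (b x))))
      = 1 + ((∑ x : R, a x) + (∑ x : R, b x)) := by
    intro a b
    simp [Fintype.card_sigma]
  set n : ℕ := Fintype.card (Unit ⊕ ((Σ x : R, Fin (P x)) ⊕ (Σ x : R, Fin (N x)))) with hndef
  have hc2 : Fintype.card (Unit ⊕ ((Σ x : R, Fin (N x)) ⊕ (Σ x : R, Fin (P x)))) = n := by
    rw [hcard, hndef, hcard]; ring
  set e1 := Fintype.equivFin (Unit ⊕ ((Σ x : R, Fin (P x)) ⊕ (Σ x : R, Fin (N x)))) with he1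
  set e2 := (Fintype.equivFin (Unit ⊕ ((Σ x : R, Fin (N x)) ⊕ (Σ x : R, Fin (P x))))).trans
    (finCongr hc2) with he2
  set vP : Fin n → R := fun i =>
    Sum.elim (fun _ => (1 : R)) (Sum.elim (fun p => p.1) fun _ => (0 : R)) (e1.symm i) with hvP
  set vN : Fin n → R := fun i =>
    Sum.elim (fun _ => (1 : R)) (Sum.elim (fun p => p.1) fun _ => (0 : R)) (e2.symm i) with hvN
  have hsumP : ∀ F : R → ℚ, (∑ i : Fin n, F (vP i))
      = F 1 + ((∑ x : R, (P x : ℚ) * F x) + (∑ x : R, (N x : ℚ)) * F 0) := by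
    intro F
    rw [← sumlem P N F]
    exact Equiv.sum_comp e1.symm fun t =>
      F (Sum.elim (fun _ => (1 : R)) (Sum.elim (fun p => p.1) fun _ => (0 : R)) t)
  have hsumN : ∀ F : R → ℚ, (∑ i : Fin n, F (vN i))
      = F 1 + ((∑ x : R, (N x : ℚ) * F x) + (∑ x : R, (P x : ℚ)) * F 0) := by
    intro F
    rw [← sumlem N P F]
    exact Equiv.sum_comp e2.symm fun t =>
      F (Sum.elim (fun _ => (1 : R)) (Sum.elim (fun p => p.1) fun _ => (0 : R)) t)
  set i₀ : Fin n := e1 (Sum.inl ()) with hi₀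
  set j₀ : Fin n := e2 (Sum.inl ()) with hj₀
  have hvPi₀ : vP i₀ = 1 := by simp [hvP, hi₀]
  have hvNj₀ : vN j₀ = 1 := by simp [hvN, hj₀]
  -- the code and the isometry
  set ℓ : R →ₗ[R] (Fin n → R) :=
    { toFun := fun x => x • vP
      map_add' := fun a b => add_smul a b vP
      map_smul' := fun r x => mul_smul r x vP } with hℓ
  set C : Submodule R (Fin n → R) := LinearMap.range ℓ with hC
  have hmemC : ∀ c : C, (c : Fin n → R) = ((c : Fin n → R) i₀) • vP := by
    rintro ⟨c, x, hx⟩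
    have hcx : c = x • vP := hx.symm
    have h2 : c i₀ = x := by rw [hcx]; simp [hvPi₀, smul_eq_mul]
    show c = c i₀ • vP
    rw [h2, hcx]
  set φ : C →ₗ[R] (Fin n → R) :=
    { toFun := fun c => ((c : Fin n → R) i₀) • vN
      map_add' := fun c d => by simp [add_smul]
      map_smul' := fun r c => by simp [mul_smul, smul_eq_mul] } with hφ
  have hφapp : ∀ c : C, φ c = ((c : Fin n → R) i₀) • vN := fun c => rfl
  have hφinj : Function.Injective φ := by
    intro c d h
    have h1 : ((c : Fin n → R) i₀) • vN = ((d : Fin n → R) i₀) • vN := h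
    have h2 : (c : Fin n → R) i₀ = (d : Fin n → R) i₀ := by
      have := congrFun h1 j₀
      simpa [hvNj₀] using this
    exact Subtype.ext (by rw [hmemC c, hmemC d, h2])
  have hφw : ∀ c : C, ∑ i, w (φ c i) = ∑ i, w ((c : Fin n → R) i) := by
    intro c
    set x := (c : Fin n → R) i₀ with hx
    have hL : ∑ i, w (φ c i) = ∑ i : Fin n, w (x * vN i) := by
      refine Finset.sum_congr rfl fun i _ => ?_
      rw [hφapp]; simp [smul_eq_mul]; rfl
    have hR : ∑ i, w ((c : Fin n → R) i) = ∑ i : Fin n, w (x * vP i) := by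
      refine Finset.sum_congr rfl fun i _ => ?_
      have h3 := congrFun (hmemC c) i
      rw [h3]; simp [smul_eq_mul]; rfl
    rw [hL, hR, hsumN (fun y => w (x * y)), hsumP (fun y => w (x * y))]
    rw [mul_zero, h0, mul_zero, mul_zero, add_zero, add_zero]
    congr 1
    have hdiff : ∑ z : R, ((P z : ℚ) * w (x * z) - (N z : ℚ) * w (x * z)) = 0 := by
      have hcast : ∀ z : R, ((P z : ℚ) - (N z : ℚ)) = (M z : ℚ) := fun z => by
        exact_mod_cast congrArg (fun t : ℤ => (t : ℚ)) (hPN z)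
      calc ∑ z : R, ((P z : ℚ) * w (x * z) - (N z : ℚ) * w (x * z))
          = ∑ z : R, (M z : ℚ) * w (x * z) := by
            refine Finset.sum_congr rfl fun z _ => ?_
            rw [← hcast z]; ring
        _ = 0 := horthM x
    rw [Finset.sum_sub_distrib] at hdiff
    linarith [hdiff]
  obtain ⟨π, u, hu, hmon⟩ := hEP n C φ hφinj hφw
  -- apply to the generator
  have hvPC : vP ∈ C := ⟨1, one_smul R vP⟩
  have hgen : ∀ i, vN i = vP (π i) * (u i : R) := by
    intro i
    have := hmon ⟨vP, hvPC⟩ i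
    rw [hφapp] at this
    simpa [hvPi₀] using this
  -- counting argument: M vanishes on nonzero elements
  have hMzero : ∀ x₀ : R, x₀ ≠ 0 → M x₀ = 0 := by
    intro x₀ hx₀
    set S : Set R := {z | ∃ c : Rˣ, x₀ * (c : R) = z} with hS
    set F : R → ℚ := fun z => if z ∈ S then 1 else 0 with hF
    have haF : ∀ (c : Rˣ) (z : R), F (z * c) = F z := by
      intro c z
      have : z * (c : R) ∈ S ↔ z ∈ S := by
        constructor
        · rintro ⟨c', hc'⟩
          refine ⟨c' * c⁻¹, ?_⟩
          have : x₀ * (c' : R) * ((c⁻¹ : Rˣ) : R) = z * (c : R) * ((c⁻¹ : Rˣ) : R) := by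
            rw [hc']
          simpa [mul_assoc] using this
        · rintro ⟨c', hc'⟩
          exact ⟨c' * c, by simp [← hc', mul_assoc]⟩
      simp only [hF]
      by_cases h : z ∈ S <;> simp [h, this]
    have hF0 : F 0 = 0 := by
      have : (0 : R) ∉ S := by
        rintro ⟨c, hc⟩
        apply hx₀
        have : x₀ * (c : R) * ((c⁻¹ : Rˣ) : R) = 0 * ((c⁻¹ : Rˣ) : R) := by rw [hc]
        simpa [mul_assoc] using this
      simp [hF, this]
    have hchain : ∑ i : Fin n, F (vN i) = ∑ i : Fin n, F (vP i) := by
      calc ∑ i : Fin n, F (vN i) = ∑ i : Fin n, F (vP (π i)) := by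
            refine Finset.sum_congr rfl fun i _ => ?_
            rw [hgen i, haF]
        _ = ∑ i : Fin n, F (vP i) := Equiv.sum_comp π (fun j => F (vP j))
    rw [hsumN F, hsumP F, hF0, mul_zero, mul_zero, add_zero, add_zero] at hchain
    have hMF : ∑ z : R, (M z : ℚ) * F z = 0 := by
      have : ∀ z : R, (M z : ℚ) * F z = (P z : ℚ) * F z - (N z : ℚ) * F z := by
        intro z
        have h1 : ((P z : ℚ) - (N z : ℚ)) = (M z : ℚ) := by
          exact_mod_cast congrArg (fun t : ℤ => (t : ℚ)) (hPN z)
        rw [← h1]; ring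
      simp_rw [this]
      rw [Finset.sum_sub_distrib]
      linarith [hchain]
    -- evaluate the sum: all terms in S are equal to M x₀
    have hMS : ∀ z ∈ S, M z = M x₀ := by
      rintro z ⟨c, hc⟩
      rw [← hc]
      exact hMinv c x₀
    have heval : ∑ z : R, (M z : ℚ) * F z
        = ((Finset.univ.filter (fun z => z ∈ S)).card : ℚ) * (M x₀ : ℚ) := by
      have h1 : ∑ z : R, (M z : ℚ) * F z
          = ∑ z ∈ Finset.univ.filter (fun z => z ∈ S), (M z : ℚ) := by
        rw [Finset.sum_filter]
        refine Finset.sum_congr rfl fun z _ => ?_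
        simp only [hF]
        by_cases h : z ∈ S <;> simp [h]
      rw [h1]
      have h2 : ∀ z ∈ Finset.univ.filter (fun z => z ∈ S), (M z : ℚ) = (M x₀ : ℚ) := by
        intro z hz
        have := hMS z (Finset.mem_filter.mp hz).2
        exact_mod_cast congrArg (fun t : ℤ => (t : ℚ)) this
      rw [Finset.sum_congr rfl h2, Finset.sum_const, nsmul_eq_mul]
    have hcardpos : ((Finset.univ.filter (fun z => z ∈ S)).card : ℚ) ≠ 0 := by
      have hx₀S : x₀ ∈ S := ⟨1, by simp⟩
      have : x₀ ∈ Finset.univ.filter (fun z => z ∈ S) := by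
        simp [hx₀S]
      have hpos : 0 < (Finset.univ.filter (fun z => z ∈ S)).card :=
        Finset.card_pos.mpr ⟨x₀, this⟩
      exact_mod_cast hpos.ne'
    have : (M x₀ : ℚ) = 0 := by
      rw [heval] at hMF
      exact (mul_eq_zero.mp hMF).resolve_left hcardpos
    exact_mod_cast this
  -- conclude g = 0
  funext x
  have hMx : M x = 0 := by
    by_cases hx : x = 0
    · rw [hx]; exact hM0
    · exact hMzero x hx
  have := hM x
  rw [hMx] at this
  simp only [Int.cast_zero] at this
  have := mul_eq_zero.mp this
  simpa [hDne] using this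

end Aux

section Dim

variable (S : Type) [Ring S] [Fintype S]

/-- Fully left-invariant functions. -/
def WLsub : Submodule ℚ (S → ℚ) where
  carrier := {f | ∀ (u : Sˣ) (x : S), f ((u : S) * x) = f x}
  add_mem' := fun hf hg u x => by simp only [Pi.add_apply, hf u x, hg u x]
  zero_mem' := fun u x => rfl
  smul_mem' := fun c f hf u x => by simp only [Pi.smul_apply, hf u x]

/-- Invariant functions are functions on the orbit space. -/
noncomputable def quotEquiv :
    WLsub S ≃ₗ[ℚ] (MulAction.orbitRel.Quotient Sˣ S → ℚ) where
  toFun f := Quotient.lift (f : S → ℚ) (by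
    rintro a b ⟨u, hu⟩
    have hu' : (u : S) * b = a := hu
    rw [← hu']
    exact f.2 u b)
  map_add' f g := by
    funext q; induction q using Quotient.ind; rfl
  map_smul' c f := by
    funext q; induction q using Quotient.ind; rfl
  invFun φ := ⟨fun x => φ (Quotient.mk _ x), fun u x => by
    dsimp only
    congr 1
    exact Quotient.sound ⟨u, rfl⟩⟩
  left_inv f := Subtype.ext (funext fun x => rfl)
  right_inv φ := funext fun q => by induction q using Quotient.ind; rfl

/-- Evaluation at `0`. -/
def evZeroW : WLsub S →ₗ[ℚ] ℚ where
  toFun f := (f : S → ℚ) 0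
  map_add' f g := rfl
  map_smul' c f := rfl

set_option synthInstance.maxHeartbeats 1000000 in
theorem dim_VL : Module.finrank ℚ (VLsub S) + 1
    = Nat.card (MulAction.orbitRel.Quotient Sˣ S) := by
  classical
  letI : Fintype (MulAction.orbitRel.Quotient Sˣ S) := Fintype.ofFinite _
  let e : VLsub S ≃ₗ[ℚ] LinearMap.ker (evZeroW S) :=
    { toFun := fun f => ⟨⟨(f : S → ℚ), f.2.2⟩, by exact f.2.1⟩
      map_add' := fun f g => rfl
      map_smul' := fun c f => rfl
      invFun := fun f => ⟨((f : WLsub S) : S → ℚ), ⟨by exact f.2, (f : WLsub S).2⟩⟩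
      left_inv := fun f => rfl
      right_inv := fun f => rfl }
  have h1 : Module.finrank ℚ (VLsub S) = Module.finrank ℚ (LinearMap.ker (evZeroW S)) :=
    e.finrank_eq
  have h2 := LinearMap.finrank_range_add_finrank_ker (evZeroW S)
  have hsurj : LinearMap.range (evZeroW S) = ⊤ := by
    rw [LinearMap.range_eq_top]
    intro q
    exact ⟨⟨fun _ => q, fun u x => rfl⟩, rfl⟩
  rw [hsurj, finrank_top, Module.finrank_self] at h2
  have h3 : Module.finrank ℚ (WLsub S) = Nat.card (MulAction.orbitRel.Quotient Sˣ S) := by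
    rw [(quotEquiv S).finrank_eq, Module.finrank_pi, Nat.card_eq_fintype_card]
  omega

end Dim

section Frob

noncomputable instance (S : Type) [Ring S] [Fintype S] : Fintype Sᵐᵒᵖ :=
  Fintype.ofEquiv S MulOpposite.opEquiv

variable (R : Type) [Ring R] [Fintype R]

/-- Right invariant functions on `R` are left invariant functions on `Rᵐᵒᵖ`. -/
def rightLeftEquiv : VRsub R ≃ₗ[ℚ] VLsub Rᵐᵒᵖ where
  toFun g := ⟨fun y => (g : R → ℚ) y.unop, ⟨by simpa using g.2.1, by
    intro U y
    show (g : R → ℚ) (((U : Rᵐᵒᵖ) * y).unop) = _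
    rw [MulOpposite.unop_mul]
    have := g.2.2 ((Units.opEquiv U).unop) y.unop
    rw [Units.coe_unop_opEquiv] at this
    exact this⟩⟩
  invFun f := ⟨fun x => (f : Rᵐᵒᵖ → ℚ) (MulOpposite.op x), ⟨by simpa using f.2.1, by
    intro u x
    show (f : Rᵐᵒᵖ → ℚ) (MulOpposite.op (x * (u : R))) = _
    rw [MulOpposite.op_mul]
    have := f.2.2 (Units.opEquiv.symm (MulOpposite.op u)) (MulOpposite.op x)
    rw [Units.coe_opEquiv_symm] at this
    simpa using this⟩⟩
  map_add' g h := rfl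
  map_smul' c g := rfl
  left_inv g := Subtype.ext (funext fun x => rfl)
  right_inv f := Subtype.ext (funext fun y => rfl)

/-- In a Frobenius ring, left and right annihilators of an element have the
same cardinality. -/
theorem frob_ann_card (hFrob : IsFrobenius R) (a : R) :
    Nat.card {x : R // x * a = 0} = Nat.card {x : R // a * x = 0} := by
  classical
  obtain ⟨χ, hχ⟩ := hFrob
  -- injectivity of r ↦ χ(r·)
  have hinj : ∀ r : R, (∀ x : R, χ (r * x) = 1) → r = 0 := by
    intro r hr
    obtain ⟨r₀, _, h₂⟩ := hχ 1
    have e1 : r = r₀ := h₂ r fun x => by rw [hr x, AddChar.one_apply]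
    have e2 : (0 : R) = r₀ := h₂ 0 fun x => by
      rw [zero_mul, AddChar.map_zero_eq_one, AddChar.one_apply]
    rw [e1, ← e2]
  -- character sums over the second argument
  have hsum : ∀ r : R, (∑ x : R, χ (r * x)) = if r = 0 then (Fintype.card R : ℂ) else 0 := by
    intro r
    by_cases hr : r = 0
    · simp [hr]
    · rw [if_neg hr]
      set ψ : AddChar R ℂ :=
        { toFun := fun x => χ (r * x)
          map_zero_eq_one' := by simp
          map_add_eq_mul' := fun a b => by
            show χ (r * (a + b)) = χ (r * a) * χ (r * b)
            rw [mul_add, AddChar.map_add_eq_mul] } with hψ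
      have hne : ψ ≠ 1 := by
        rw [AddChar.ne_one_iff]
        by_contra hcon
        push_neg at hcon
        exact hr (hinj r hcon)
      exact AddChar.sum_eq_zero_of_ne_one hne
  -- separation : only 0 is annihilated by all characters
  have hsep : ∀ y : R, (∀ r : R, χ (r * y) = 1) → y = 0 := by
    have h3 : ∀ x : R, (∑ r : R, χ (r * x))
        = if (∀ r : R, χ (r * x) = 1) then (Fintype.card R : ℂ) else 0 := by
      intro x
      by_cases hx : ∀ r : R, χ (r * x) = 1
      · rw [if_pos hx]
        simp [hx]
      · rw [if_neg hx]
        set ψ : AddChar R ℂ :=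
          { toFun := fun r => χ (r * x)
            map_zero_eq_one' := by simp
            map_add_eq_mul' := fun a b => by
              show χ ((a + b) * x) = χ (a * x) * χ (b * x)
              rw [add_mul, AddChar.map_add_eq_mul] } with hψ
        have hne : ψ ≠ 1 := by
          rw [AddChar.ne_one_iff]
          by_contra hcon
          push_neg at hcon
          exact hx hcon
        exact AddChar.sum_eq_zero_of_ne_one hne
    have h1 : ∑ r : R, ∑ x : R, χ (r * x) = (Fintype.card R : ℂ) := by
      rw [Finset.sum_congr rfl (fun r _ => hsum r)]
      simp
    have h2 : ∑ r : R, ∑ x : R, χ (r * x) = ∑ x : R, ∑ r : R, χ (r * x) :=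
      Finset.sum_comm
    have h4 : ∑ x : R, ∑ r : R, χ (r * x)
        = ((Finset.univ.filter (fun x : R => ∀ r : R, χ (r * x) = 1)).card : ℂ)
          * (Fintype.card R : ℂ) := by
      rw [Finset.sum_congr rfl (fun x _ => h3 x), ← Finset.sum_filter,
        Finset.sum_const, nsmul_eq_mul]
    have hcardC : ((Finset.univ.filter (fun x : R => ∀ r : R, χ (r * x) = 1)).card : ℂ) = 1 := by
      have hne : (Fintype.card R : ℂ) ≠ 0 := Nat.cast_ne_zero.mpr Fintype.card_ne_zero
      have heq : (1 : ℂ) * (Fintype.card R : ℂ)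
          = ((Finset.univ.filter (fun x : R => ∀ r : R, χ (r * x) = 1)).card : ℂ)
            * (Fintype.card R : ℂ) := by
        rw [one_mul]
        exact h1.symm.trans (h2.trans h4)
      exact (mul_right_cancel₀ hne heq).symm
    have hcard1 : (Finset.univ.filter (fun x : R => ∀ r : R, χ (r * x) = 1)).card = 1 := by
      exact_mod_cast hcardC
    intro y hy
    have hymem : y ∈ Finset.univ.filter (fun x : R => ∀ r : R, χ (r * x) = 1) := by
      simp [hy]
    have h0mem : (0 : R) ∈ Finset.univ.filter (fun x : R => ∀ r : R, χ (r * x) = 1) := by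
      simp
    exact Finset.card_le_one.mp (le_of_eq hcard1) y hymem 0 h0mem
  -- sums over the first argument
  have hsum' : ∀ y : R, (∑ r : R, χ (r * y)) = if y = 0 then (Fintype.card R : ℂ) else 0 := by
    intro y
    by_cases hy : y = 0
    · simp [hy]
    · rw [if_neg hy]
      set ψ : AddChar R ℂ :=
        { toFun := fun r => χ (r * y)
          map_zero_eq_one' := by simp
          map_add_eq_mul' := fun a b => by
            show χ ((a + b) * y) = χ (a * y) * χ (b * y)
            rw [add_mul, AddChar.map_add_eq_mul] } with hψ
      have hne : ψ ≠ 1 := by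
        rw [AddChar.ne_one_iff]
        by_contra hcon
        push_neg at hcon
        exact hy (hsep y hcon)
      exact AddChar.sum_eq_zero_of_ne_one hne
  -- the double count for a
  have h1 : ∑ r : R, ∑ x : R, χ ((r * a) * x)
      = ((Finset.univ.filter (fun r : R => r * a = 0)).card : ℂ) * (Fintype.card R : ℂ) := by
    rw [Finset.sum_congr rfl (fun r _ => hsum (r * a)), ← Finset.sum_filter,
      Finset.sum_const, nsmul_eq_mul]
  have h2 : ∑ r : R, ∑ x : R, χ ((r * a) * x)
      = ((Finset.univ.filter (fun x : R => a * x = 0)).card : ℂ) * (Fintype.card R : ℂ) := by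
    rw [Finset.sum_comm]
    have : ∀ x : R, ∑ r : R, χ ((r * a) * x) = ∑ r : R, χ (r * (a * x)) := by
      intro x
      exact Finset.sum_congr rfl fun r _ => by rw [mul_assoc]
    rw [Finset.sum_congr rfl (fun x _ => (this x).trans (hsum' (a * x))),
      ← Finset.sum_filter, Finset.sum_const, nsmul_eq_mul]
  have hne : (Fintype.card R : ℂ) ≠ 0 := Nat.cast_ne_zero.mpr Fintype.card_ne_zero
  have hcards : ((Finset.univ.filter (fun r : R => r * a = 0)).card : ℂ)
      = ((Finset.univ.filter (fun x : R => a * x = 0)).card : ℂ) :=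
    mul_right_cancel₀ hne (h1.symm.trans h2)
  have hcards' : (Finset.univ.filter (fun r : R => r * a = 0)).card
      = (Finset.univ.filter (fun x : R => a * x = 0)).card := by exact_mod_cast hcards
  rw [Nat.card_eq_fintype_card, Nat.card_eq_fintype_card,
    Fintype.card_subtype, Fintype.card_subtype]
  exact hcards'

/-- Fixed point counts of the left and right unit actions agree. -/
theorem fix_card (hFrob : IsFrobenius R) (u : Rˣ) :
    Nat.card {x : R // (u : R) * x = x} = Nat.card {x : R // x * (u : R) = x} := by
  have h1 : Nat.card {x : R // (u : R) * x = x}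
      = Nat.card {x : R // ((u : R) - 1) * x = 0} :=
    Nat.card_congr (Equiv.subtypeEquivRight fun x => by
      rw [sub_mul, one_mul, sub_eq_zero])
  have h2 : Nat.card {x : R // x * (u : R) = x}
      = Nat.card {x : R // x * ((u : R) - 1) = 0} :=
    Nat.card_congr (Equiv.subtypeEquivRight fun x => by
      rw [mul_sub, mul_one, sub_eq_zero])
  rw [h1, h2]
  exact (frob_ann_card R hFrob ((u : R) - 1)).symm

/-- The number of left orbits equals the number of right orbits. -/
theorem card_orbits_eq (hFrob : IsFrobenius R) :
    Nat.card (MulAction.orbitRel.Quotient Rˣ R)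
      = Nat.card (MulAction.orbitRel.Quotient Rᵐᵒᵖˣ Rᵐᵒᵖ) := by
  classical
  letI : Fintype (MulAction.orbitRel.Quotient Rˣ R) := Fintype.ofFinite _
  letI : Fintype (MulAction.orbitRel.Quotient Rᵐᵒᵖˣ Rᵐᵒᵖ) := Fintype.ofFinite _
  letI : ∀ a : Rˣ, Fintype (MulAction.fixedBy R a) := fun a => Fintype.ofFinite _
  letI : ∀ a : Rᵐᵒᵖˣ, Fintype (MulAction.fixedBy Rᵐᵒᵖ a) := fun a => Fintype.ofFinite _
  have hb1 := MulAction.sum_card_fixedBy_eq_card_orbits_mul_card_group Rˣ R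
  have hb2 := MulAction.sum_card_fixedBy_eq_card_orbits_mul_card_group Rᵐᵒᵖˣ Rᵐᵒᵖ
  -- the equivalence of unit groups
  let eU : Rˣ ≃ Rᵐᵒᵖˣ :=
    (MulOpposite.opEquiv (α := Rˣ)).trans (Units.opEquiv (M := R)).symm.toEquiv
  have hcoeU : ∀ u : Rˣ, ((eU u : Rᵐᵒᵖˣ) : Rᵐᵒᵖ) = MulOpposite.op (u : R) := by
    intro u
    simp [eU, Units.coe_opEquiv_symm]
  have hfixcard : ∀ u : Rˣ,
      Fintype.card (MulAction.fixedBy R u) = Fintype.card (MulAction.fixedBy Rᵐᵒᵖ (eU u)) := by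
    intro u
    rw [← Nat.card_eq_fintype_card, ← Nat.card_eq_fintype_card]
    have e1 : Nat.card (MulAction.fixedBy R u) = Nat.card {x : R // (u : R) * x = x} :=
      Nat.card_congr (Equiv.subtypeEquivRight fun x => by
        rw [MulAction.mem_fixedBy, Units.smul_def, smul_eq_mul])
    have hmem : ∀ y : Rᵐᵒᵖ, y ∈ MulAction.fixedBy Rᵐᵒᵖ (eU u)
        ↔ y.unop * (u : R) = y.unop := by
      intro y
      rw [MulAction.mem_fixedBy, Units.smul_def, smul_eq_mul, hcoeU]
      constructor
      · intro h
        have := congrArg MulOpposite.unop h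
        simpa using this
      · intro h
        have := congrArg MulOpposite.op h
        simpa [MulOpposite.op_mul] using this
    have e2 : Nat.card (MulAction.fixedBy Rᵐᵒᵖ (eU u))
        = Nat.card {x : R // x * (u : R) = x} := by
      refine Nat.card_congr ⟨fun y => ⟨y.1.unop, (hmem y.1).mp y.2⟩,
        fun x => ⟨MulOpposite.op x.1, (hmem _).mpr (by simpa using x.2)⟩, ?_, ?_⟩
      · intro y
        apply Subtype.ext
        simp
      · intro x
        apply Subtype.ext
        rfl
    rw [e1, e2]
    exact fix_card R hFrob u
  have hsums : ∑ u : Rˣ, Fintype.card (MulAction.fixedBy R u)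
      = ∑ v : Rᵐᵒᵖˣ, Fintype.card (MulAction.fixedBy Rᵐᵒᵖ v) := by
    rw [Finset.sum_congr rfl fun u _ => hfixcard u]
    exact Fintype.sum_equiv eU _ _ fun u => rfl
  have hcardU : Fintype.card Rˣ = Fintype.card Rᵐᵒᵖˣ := Fintype.card_congr eU
  have hpos : 0 < Fintype.card Rˣ := Fintype.card_pos
  rw [Nat.card_eq_fintype_card, Nat.card_eq_fintype_card]
  have := hb1.symm.trans (hsums.trans hb2)
  rw [← hcardU] at this
  exact Nat.eq_of_mul_eq_mul_right hpos this

/-- Key lemma 2 (proved from the Frobenius property): the two spaces have the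
same dimension. -/
theorem key_dim (hFrob : IsFrobenius R) :
    Module.finrank ℚ (VLsub R) = Module.finrank ℚ (VRsub R) := by
  have h1 := dim_VL R
  have h2 := dim_VL Rᵐᵒᵖ
  have h3 : Module.finrank ℚ (VRsub R) = Module.finrank ℚ (VLsub Rᵐᵒᵖ) :=
    (rightLeftEquiv R).finrank_eq
  have h4 := card_orbits_eq R hFrob
  omega

end Frob

/-- if the bi-invariant weight `w` with `w 0 = 0` satisfies the
Extension Property, then the correlation map `f ↦ wf` is a bijection from the
left-invariant functions vanishing at `0` onto the right-invariant functions
vanishing at `0`. -/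
theorem stmt4 (R : Type) [Ring R] [Fintype R] (hFrob : IsFrobenius R)
    (w : R → ℚ)
    (hbi : ∀ (u : Rˣ) (x : R), w ((u : R) * x) = w x ∧ w (x * (u : R)) = w x)
    (h0 : w 0 = 0) (hEP : ExtensionProperty R w) :
    Set.BijOn (correlation R w) (leftInvV0 R) (rightInvV0 R) := by
  classical
  -- the two restricted maps
  have hAmaps : ∀ f ∈ VLsub R, corrA w f ∈ VRsub R := by
    rintro f ⟨hf0, hfinv⟩
    constructor
    · simp [corrA, correlation, mul_zero, h0]
    · intro u x
      simp only [corrA, correlation, LinearMap.coe_mk, AddHom.coe_mk]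
      refine Finset.sum_congr rfl fun r _ => ?_
      rw [← mul_assoc, (hbi u (r * x)).2]
  have hBmaps : ∀ g ∈ VRsub R, corrB w g ∈ VLsub R := by
    rintro g ⟨hg0, hginv⟩
    constructor
    · simp [corrB, zero_mul, h0]
    · intro u r
      simp only [corrB, LinearMap.coe_mk, AddHom.coe_mk]
      refine Finset.sum_congr rfl fun x _ => ?_
      rw [mul_assoc, (hbi u (r * x)).1]
  let A : VLsub R →ₗ[ℚ] VRsub R := (corrA w).restrict hAmaps
  let B : VRsub R →ₗ[ℚ] VLsub R := (corrB w).restrict hBmaps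
  have hBinj : Function.Injective B := by
    intro g1 g2 hg
    have : corrB w ((g1 : R → ℚ) - g2) = 0 := by
      rw [map_sub]
      have : (B g1 : R → ℚ) = B g2 := congrArg _ hg
      simpa [B, LinearMap.restrict_apply, sub_eq_zero] using this
    have hmem : ((g1 : R → ℚ) - g2) ∈ rightInvV0 R := (VRsub R).sub_mem g1.2 g2.2
    have := key_inj w hbi h0 hEP _ hmem this
    exact Subtype.ext (sub_eq_zero.mp this)
  -- A ∘ B is injective, hence surjective
  have hABinj : Function.Injective (A.comp B) := by
    intro g1 g2 hg
    have h' : corrA w (corrB w ((g1 : R → ℚ) - g2)) = 0 := by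
      have : (A (B g1) : R → ℚ) = A (B g2) := congrArg _ hg
      have h2 : corrA w (corrB w (g1 : R → ℚ)) = corrA w (corrB w (g2 : R → ℚ)) := by
        simpa [A, B, LinearMap.restrict_apply] using this
      rw [map_sub, map_sub, h2, sub_self]
    -- use the adjoint identity with f := corrB w (g1 - g2)
    set d : R → ℚ := (g1 : R → ℚ) - g2 with hd
    have hzero : ∑ r : R, corrB w d r * corrB w d r = 0 := by
      have := adjoint_eq w (corrB w d) d
      rw [show correlation R w (corrB w d) = corrA w (corrB w d) from rfl, h'] at this
      simpa using this.symm
    have hB0 : corrB w d = 0 := by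
      funext r
      have hnn : ∀ r ∈ Finset.univ (α := R), 0 ≤ corrB w d r * corrB w d r :=
        fun r _ => mul_self_nonneg _
      have := (Finset.sum_eq_zero_iff_of_nonneg hnn).mp hzero r (Finset.mem_univ r)
      exact mul_self_eq_zero.mp this
    have hmem : d ∈ rightInvV0 R := (VRsub R).sub_mem g1.2 g2.2
    have := key_inj w hbi h0 hEP _ hmem hB0
    exact Subtype.ext (sub_eq_zero.mp this)
  haveI : FiniteDimensional ℚ (VRsub R) := inferInstance
  haveI : FiniteDimensional ℚ (VLsub R) := inferInstance
  have hABsurj : Function.Surjective (A.comp B) :=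
    LinearMap.injective_iff_surjective.mp hABinj
  have hAsurj : Function.Surjective A := by
    intro y
    obtain ⟨g, hg⟩ := hABsurj y
    exact ⟨B g, hg⟩
  have hAinj : Function.Injective A :=
    (LinearMap.injective_iff_surjective_of_finrank_eq_finrank
      (key_dim R hFrob)).mpr hAsurj
  refine ⟨?_, ?_, ?_⟩
  · exact fun f hf => hAmaps f hf
  · intro f1 hf1 f2 hf2 heq
    have : A ⟨f1, hf1⟩ = A ⟨f2, hf2⟩ := by
      apply Subtype.ext
      simpa [A, LinearMap.restrict_apply, corrA] using heq
    exact congrArg Subtype.val (hAinj this)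
  · intro g hg
    obtain ⟨f, hf⟩ := hAsurj ⟨g, hg⟩
    refine ⟨(f : R → ℚ), f.2, ?_⟩
    have : (A f : R → ℚ) = g := congrArg Subtype.val hf
    simpa [A, LinearMap.restrict_apply, corrA] using this
end
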